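/- arXiv:1603.05303 — 8 statements merged into one kernel-verified Lean document; each statement's English description precedes it below -/
import Mathlib

section
/- The set of complex numbers a such that the cubic polynomial f_{a,0}(z) = z³ − 3a²z is post-critically finite (equivalently, such that a is preperiodic under f_{a,0}) is infinite. -/
/-- The cubic polynomial `f_{a,b}(z) = z³ - 3a²z + b`. -/
noncomputable def fab (a b : ℂ) : ℂ → ℂ := fun z => z ^ 3 - 3 * a ^ 2 * z + b

/-- A point `c` is preperiodic under `f` if `f^m(c) = f^n(c)` for some `0 ≤ m < n`. -/
def IsPreperiodic (f : ℂ → ℂ) (c : ℂ) : Prop := ∃ m n : ℕ, m < n ∧ f^[m] c = f^[n] c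

/-- `f_{a,b}` is post-critically finite: both critical points `±a` are preperiodic. -/
def IsPCF (a b : ℂ) : Prop := IsPreperiodic (fab a b) a ∧ IsPreperiodic (fab a b) (-a)

/-- `C ⊆ ℂ²` is an irreducible plane curve: the zero locus of an irreducible
polynomial in two variables. -/
def IsIrredPlaneCurve (C : Set (ℂ × ℂ)) : Prop :=
  ∃ P : MvPolynomial (Fin 2) ℂ, Irreducible P ∧
    C = {p : ℂ × ℂ | MvPolynomial.eval ![p.1, p.2] P = 0}

open Polynomial

noncomputable def gp : ℕ → Polynomial ℂ
  | 0 => X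
  | (k+1) => gp k ^ 3 - 3 * X ^ 2 * gp k

lemma eval_gp_succ (k : ℕ) (a : ℂ) :
    (gp (k+1)).eval a = (gp k).eval a ^ 3 - 3 * a ^ 2 * (gp k).eval a := by
  simp [gp]

lemma iter_eq (a : ℂ) (n : ℕ) : (fab a 0)^[n] a = (gp n).eval a := by
  induction n with
  | zero => simp [gp]
  | succ n ih =>
    rw [Function.iterate_succ_apply', ih, eval_gp_succ, fab]
    ring

lemma gp_odd (n : ℕ) (a : ℂ) : (gp n).eval (-a) = - (gp n).eval a := by
  induction n with
  | zero => simp [gp]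
  | succ n ih => rw [eval_gp_succ, eval_gp_succ, ih]; ring

lemma roots_mono {j k : ℕ} (h : j ≤ k) {a : ℂ} (hz : (gp j).eval a = 0) :
    (gp k).eval a = 0 := by
  induction k with
  | zero => exact (Nat.le_zero.mp h ▸ hz)
  | succ k ih =>
    rcases Nat.lt_or_ge j (k+1) with h' | h'
    · have := ih (Nat.lt_succ_iff.mp h')
      rw [eval_gp_succ, this]; ring
    · have : j = k + 1 := le_antisymm h h'
      exact this ▸ hz

lemma X_dvd_gp (k : ℕ) : (X : Polynomial ℂ) ∣ gp k := by
  induction k with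
  | zero => simp [gp]
  | succ k ih =>
    show (X : Polynomial ℂ) ∣ gp k ^ 3 - 3 * X ^ 2 * gp k
    exact dvd_sub (ih.trans (dvd_pow_self _ (by norm_num))) ⟨3 * X * gp k, by ring⟩

lemma X_sq_dvd_gp (k : ℕ) : (X : Polynomial ℂ)^2 ∣ gp (k+1) := by
  obtain ⟨q, hq⟩ := X_dvd_gp k
  show (X : Polynomial ℂ)^2 ∣ gp k ^ 3 - 3 * X ^ 2 * gp k
  exact dvd_sub ⟨X * q^3, by rw [hq]; ring⟩ ⟨3 * gp k, by ring⟩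

lemma coeff_one_gp (k : ℕ) : (gp (k+1)).coeff 1 = 0 := by
  obtain ⟨q, hq⟩ := X_sq_dvd_gp k
  rw [hq, mul_comm, Polynomial.coeff_mul_X_pow']
  norm_num

lemma natDegree_gp (k : ℕ) : (gp (k+1)).natDegree = 3^(k+1) := by
  induction k with
  | zero =>
    have : gp 1 = C (-2) * X^3 := by
      show gp 0 ^ 3 - 3 * X ^ 2 * gp 0 = _
      simp only [gp]
      simp only [map_neg, map_ofNat]
      ring_nf
    rw [this]
    rw [natDegree_C_mul (by norm_num)]
    simp
  | succ k ih =>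
    have hne : gp (k+1) ≠ 0 := by
      intro h
      rw [h] at ih
      simp at ih
      have := Nat.one_le_pow (k+1) 3 (by norm_num)
      omega
    have h1 : (gp (k+1) ^ 3).natDegree = 3 * 3^(k+1) := by
      rw [natDegree_pow, ih]
    have h2 : (3 * X ^ 2 * gp (k+1) : Polynomial ℂ).natDegree < 3 * 3^(k+1) := by
      calc (3 * X ^ 2 * gp (k+1) : Polynomial ℂ).natDegree
          ≤ (3 * X ^ 2 : Polynomial ℂ).natDegree + (gp (k+1)).natDegree :=
            natDegree_mul_le
        _ ≤ 2 + 3^(k+1) := by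
            rw [ih]
            have : (3 * X ^ 2 : Polynomial ℂ).natDegree ≤ 2 := by
              calc (3 * X ^ 2 : Polynomial ℂ).natDegree ≤ _ + _ := natDegree_mul_le
                _ ≤ 2 := by simp
            omega
        _ < 3 * 3^(k+1) := by
            have : 1 ≤ 3^(k+1) := Nat.one_le_pow _ _ (by norm_num)
            omega
    show ((gp (k+1)) ^ 3 - 3 * X ^ 2 * gp (k+1)).natDegree = 3 ^ (k+1+1)
    rw [natDegree_sub_eq_left_of_natDegree_lt (by rw [h1]; exact h2), h1]
    ring

noncomputable def s3 : ℂ := (Real.sqrt 3 : ℝ)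

lemma s3_sq : s3 ^ 2 = 3 := by
  unfold s3
  norm_cast
  rw [Real.sq_sqrt] <;> norm_num

lemma s3_ne : s3 ≠ 0 := by
  intro h
  have := s3_sq
  rw [h] at this
  norm_num at this

lemma exists_ak (k : ℕ) : ∃ z : ℂ, z ≠ 0 ∧ (gp (k+1)).eval z = s3 * z := by
  set p : Polynomial ℂ := gp (k+1) - C s3 * X with hp
  have hc1 : p.coeff 1 = -s3 := by
    rw [hp, coeff_sub, coeff_one_gp, coeff_C_mul, coeff_X_one]
    ring
  have hc0 : p.coeff 0 = 0 := by
    rw [hp, coeff_sub, coeff_C_mul, coeff_X_zero]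
    obtain ⟨q, hq⟩ := X_dvd_gp (k+1)
    rw [hq]
    simp
  have hXdvd : (X : Polynomial ℂ) ∣ p := X_dvd_iff.mpr hc0
  obtain ⟨q, hq⟩ := hXdvd
  have hq0 : q.coeff 0 = -s3 := by
    have := hc1
    rw [hq] at this
    rwa [Polynomial.coeff_X_mul] at this
  have hqne : q ≠ 0 := by
    intro h; rw [h] at hq0; simp at hq0; exact s3_ne hq0
  have hpdeg : p.natDegree = 3^(k+1) := by
    rw [hp]
    have h1 : (C s3 * X : Polynomial ℂ).natDegree < (gp (k+1)).natDegree := by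
      rw [natDegree_gp]
      have : (C s3 * X : Polynomial ℂ).natDegree ≤ 1 := by
        calc (C s3 * X : Polynomial ℂ).natDegree ≤ _ + _ := natDegree_mul_le
          _ ≤ 1 := by simp
      have h3 : 3 ≤ 3^(k+1) := by
        calc (3:ℕ) = 3^1 := by norm_num
          _ ≤ 3^(k+1) := Nat.pow_le_pow_right (by norm_num) (by omega)
      omega
    rw [natDegree_sub_eq_left_of_natDegree_lt h1, natDegree_gp]
  have hqdeg : 0 < q.natDegree := by
    have hXne : (X : Polynomial ℂ) ≠ 0 := X_ne_zero
    have := hpdeg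
    rw [hq, natDegree_mul hXne hqne, natDegree_X] at this
    have h3 : 3 ≤ 3^(k+1) := by
      calc (3:ℕ) = 3^1 := by norm_num
        _ ≤ 3^(k+1) := Nat.pow_le_pow_right (by norm_num) (by omega)
    omega
  obtain ⟨z, hz⟩ := Complex.exists_root (natDegree_pos_iff_degree_pos.mp hqdeg)
  refine ⟨z, ?_, ?_⟩
  · intro h
    rw [h] at hz
    rw [IsRoot, ← coeff_zero_eq_eval_zero, hq0] at hz
    exact s3_ne (neg_eq_zero.mp hz)
  · have : p.eval z = 0 := by rw [hq]; simp [hz.eq_zero]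
    have h2 : (gp (k+1)).eval z - s3 * z = 0 := by
      rw [hp] at this
      simpa using this
    linear_combination h2

noncomputable def ak (k : ℕ) : ℂ := (exists_ak k).choose

lemma ak_ne (k : ℕ) : ak k ≠ 0 := (exists_ak k).choose_spec.1

lemma ak_eval (k : ℕ) : (gp (k+1)).eval (ak k) = s3 * ak k := (exists_ak k).choose_spec.2

lemma ak_root (k : ℕ) : (gp (k+2)).eval (ak k) = 0 := by
  rw [eval_gp_succ, ak_eval]
  linear_combination (s3 * (ak k)^3) * s3_sq

lemma fab_iter_odd (a : ℂ) (n : ℕ) (z : ℂ) :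
    (fab a 0)^[n] (-z) = -((fab a 0)^[n] z) := by
  induction n with
  | zero => simp
  | succ n ih =>
    rw [Function.iterate_succ_apply', Function.iterate_succ_apply', ih]
    simp [fab]; ring

lemma ak_pcf (k : ℕ) : IsPCF (ak k) 0 := by
  have h2 : (gp (k+2)).eval (ak k) = 0 := ak_root k
  have h3 : (gp (k+3)).eval (ak k) = 0 := roots_mono (by omega) h2
  constructor
  · exact ⟨k+2, k+3, by omega, by rw [iter_eq, iter_eq, h2, h3]⟩
  · refine ⟨k+2, k+3, by omega, ?_⟩
    rw [fab_iter_odd, fab_iter_odd, iter_eq, iter_eq, h2, h3]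

lemma ak_inj : Function.Injective ak := by
  have key : ∀ j k : ℕ, j < k → ak j ≠ ak k := by
    intro j k hjk heq
    have h1 : (gp (k+1)).eval (ak j) = 0 :=
      roots_mono (by omega) (ak_root j)
    rw [heq, ak_eval] at h1
    exact mul_ne_zero s3_ne (ak_ne k) h1
  intro j k h
  rcases lt_trichotomy j k with h' | h' | h'
  · exact absurd h (key j k h')
  · exact h'
  · exact absurd h.symm (key k j h')

theorem stmt4 : {a : ℂ | IsPCF a 0}.Infinite := by
  exact Set.infinite_of_injective_forall_mem ak_inj (fun k => ak_pcf k)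
end

section
/- Let a, b ∈ ℂ((t)) be nonzero, set γ_a := −ord(a), γ_b := −ord(b), and γ_max := max(3γ_a, γ_b), and assume γ_max > 0. If n₀ ≥ 1 is an integer such that c_{n₀} ≠ 0 and 3γ_{n₀} > γ_max, where γ_n := −ord(c_n), then for every n ≥ n₀ one has c_n ≠ 0 and γ_n = 3^{n−n₀}·γ_{n₀}. -/
lemma order_eq_of_coeff' {x : LaurentSeries ℂ} {g : ℤ} (h : x.coeff g ≠ 0)
    (hbelow : ∀ i < g, x.coeff i = 0) : x.order = g := by
  have hx : x ≠ 0 := HahnSeries.ne_zero_of_coeff_ne_zero h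
  refine le_antisymm (HahnSeries.order_le_of_coeff_ne_zero h) ?_
  by_contra hlt
  exact (HahnSeries.coeff_order_eq_zero.not.mpr hx) (hbelow _ (lt_of_not_ge hlt))

lemma key_step (a b : LaurentSeries ℂ) (ha : a ≠ 0) (hb : b ≠ 0)
    (x : LaurentSeries ℂ) (hx : x ≠ 0)
    (h1 : x.order < a.order) (h2 : 3 * x.order < b.order) :
    (x ^ 3 - 3 * a ^ 2 * x + b) ≠ 0 ∧
      (x ^ 3 - 3 * a ^ 2 * x + b).order = 3 * x.order := by
  have h3 : (3 : LaurentSeries ℂ) ≠ 0 := by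
    rw [show (3:LaurentSeries ℂ) = HahnSeries.C 3 from (map_ofNat HahnSeries.C 3).symm]
    exact HahnSeries.C_ne_zero (by norm_num)
  have h3o : (3 : LaurentSeries ℂ).order = 0 := by
    rw [show (3:LaurentSeries ℂ) = HahnSeries.C 3 from (map_ofNat HahnSeries.C 3).symm,
      HahnSeries.order_C]
  have hx3 : x ^ 3 ≠ 0 := pow_ne_zero 3 hx
  have hx3o : (x ^ 3).order = 3 * x.order := by
    rw [HahnSeries.order_pow]
    simp [smul_eq_mul]
  have hmne : 3 * a ^ 2 * x ≠ 0 := mul_ne_zero (mul_ne_zero h3 (pow_ne_zero 2 ha)) hx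
  have hmo : (3 * a ^ 2 * x).order = 2 * a.order + x.order := by
    rw [HahnSeries.order_mul (mul_ne_zero h3 (pow_ne_zero 2 ha)) hx,
      HahnSeries.order_mul h3 (pow_ne_zero 2 ha), h3o, HahnSeries.order_pow]
    simp [smul_eq_mul]
  have hc1 : (x ^ 3).coeff (3 * x.order) ≠ 0 := by
    have := HahnSeries.coeff_order_eq_zero.not.mpr hx3
    rwa [hx3o] at this
  have hc2 : (3 * a ^ 2 * x).coeff (3 * x.order) = 0 :=
    HahnSeries.coeff_eq_zero_of_lt_order (by rw [hmo]; linarith)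
  have hc3 : b.coeff (3 * x.order) = 0 := HahnSeries.coeff_eq_zero_of_lt_order (by linarith)
  have hcoeff : (x ^ 3 - 3 * a ^ 2 * x + b).coeff (3 * x.order) ≠ 0 := by
    simpa [HahnSeries.coeff_add, HahnSeries.coeff_sub, hc2, hc3] using hc1
  have horder : (x ^ 3 - 3 * a ^ 2 * x + b).order = 3 * x.order := by
    apply order_eq_of_coeff' hcoeff
    intro i hi
    have e1 : (x ^ 3).coeff i = 0 := HahnSeries.coeff_eq_zero_of_lt_order (by rw [hx3o]; omega)
    have e2 : (3 * a ^ 2 * x).coeff i = 0 :=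
      HahnSeries.coeff_eq_zero_of_lt_order (by rw [hmo]; linarith)
    have e3 : b.coeff i = 0 := HahnSeries.coeff_eq_zero_of_lt_order (by linarith)
    simp [HahnSeries.coeff_add, HahnSeries.coeff_sub, e1, e2, e3]
  exact ⟨HahnSeries.ne_zero_of_coeff_ne_zero hcoeff, horder⟩

theorem stmt5 (a b : LaurentSeries ℂ) (ha : a ≠ 0) (hb : b ≠ 0)
    (c : ℕ → LaurentSeries ℂ) (hc0 : c 0 = a)
    (hcrec : ∀ n, c (n + 1) = (c n) ^ 3 - 3 * a ^ 2 * (c n) + b)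
    (hmax : 0 < max (3 * (-a.order)) (-b.order))
    (n₀ : ℕ) (hn₀ : 1 ≤ n₀) (hcn₀ : c n₀ ≠ 0)
    (hγ : max (3 * (-a.order)) (-b.order) < 3 * (-(c n₀).order)) :
    ∀ n, n₀ ≤ n → c n ≠ 0 ∧ -(c n).order = 3 ^ (n - n₀) * (-(c n₀).order) := by
  have main : ∀ k : ℕ, c (n₀ + k) ≠ 0 ∧
      (c (n₀ + k)).order = 3 ^ k * (c n₀).order ∧
      max (3 * (-a.order)) (-b.order) < 3 * (-(c (n₀ + k)).order) := by
    intro k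
    induction k with
    | zero => exact ⟨hcn₀, by simp, hγ⟩
    | succ k ih =>
      obtain ⟨hne, hord, hlt⟩ := ih
      set x := c (n₀ + k) with hxdef
      have hax : 3 * (-a.order) < 3 * (-x.order) := lt_of_le_of_lt (le_max_left _ _) hlt
      have hbx : -b.order < 3 * (-x.order) := lt_of_le_of_lt (le_max_right _ _) hlt
      have h1 : x.order < a.order := by linarith
      have h2 : 3 * x.order < b.order := by linarith
      obtain ⟨hne', hord'⟩ := key_step a b ha hb x hne h1 h2
      have heq : c (n₀ + (k + 1)) = x ^ 3 - 3 * a ^ 2 * x + b := by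
        rw [show n₀ + (k + 1) = (n₀ + k) + 1 from rfl, hcrec]
      have hxpos : 0 < -x.order := by
        have := lt_trans hmax hlt; linarith
      refine ⟨heq ▸ hne', ?_, ?_⟩
      · rw [heq, hord', hord]; ring
      · rw [heq, hord']
        have : max (3 * (-a.order)) (-b.order) < 3 * (-x.order) := hlt
        linarith
  intro n hn
  obtain ⟨hne, hord, _⟩ := main (n - n₀)
  have hnk : n₀ + (n - n₀) = n := by omega
  rw [hnk] at hne hord
  exact ⟨hne, by rw [hord]; ring⟩
end

section
/- Let a, b ∈ ℂ((t)) be nonzero, set γ_a := −ord(a), γ_b := −ord(b), and γ_max := max(3γ_a, γ_b), and assume γ_max > 0. If b − 2a³ ≠ 0 and ord(b − 2a³) = −γ_max, then for every n ≥ 1 one has c_n ≠ 0 and γ_n = 3^{n−1}·γ_max, where γ_n := −ord(c_n). -/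
lemma stmt6_aux (x y : LaurentSeries ℂ) (hx : x ≠ 0)
    (hlt : x.orderTop < y.orderTop) :
    x + y ≠ 0 ∧ (x + y).order = x.order := by
  have h := HahnSeries.orderTop_add_eq_left hlt
  have hne : x + y ≠ 0 := HahnSeries.orderTop_ne_top.symm.mpr
    (h ▸ HahnSeries.orderTop_ne_top.symm.mp hx)
  refine ⟨hne, ?_⟩
  have h2 : ((x + y).order : WithTop ℤ) = (x.order : WithTop ℤ) := by
    rw [HahnSeries.order_eq_orderTop_of_ne_zero hne, h,
      ← HahnSeries.order_eq_orderTop_of_ne_zero hx]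
  exact_mod_cast h2

theorem stmt6 (a b : LaurentSeries ℂ) (ha : a ≠ 0) (hb : b ≠ 0)
    (c : ℕ → LaurentSeries ℂ) (hc0 : c 0 = a)
    (hcrec : ∀ n, c (n + 1) = (c n) ^ 3 - 3 * a ^ 2 * (c n) + b)
    (hmax : 0 < max (3 * (-a.order)) (-b.order))
    (hne : b - 2 * a ^ 3 ≠ 0)
    (hord : (b - 2 * a ^ 3).order = -(max (3 * (-a.order)) (-b.order))) :
    ∀ n, 1 ≤ n → c n ≠ 0 ∧
      -(c n).order = 3 ^ (n - 1) * max (3 * (-a.order)) (-b.order) := by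
  set γ : ℤ := max (3 * (-a.order)) (-b.order) with hγ
  have h3ne : (3 : LaurentSeries ℂ) ≠ 0 := by
    rw [← map_ofNat (HahnSeries.C (Γ := ℤ) (R := ℂ)) 3]
    exact HahnSeries.C_ne_zero (by norm_num)
  have h3ord : (3 : LaurentSeries ℂ).order = 0 := by
    rw [← map_ofNat (HahnSeries.C (Γ := ℤ) (R := ℂ)) 3]
    exact HahnSeries.order_C
  have haγ : 3 * (-a.order) ≤ γ := le_max_left _ _
  have hbγ : -b.order ≤ γ := le_max_right _ _
  have key : ∀ n : ℕ, c (n + 1) ≠ 0 ∧ (c (n + 1)).order = -(3 ^ n * γ) := by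
    intro n
    induction n with
    | zero =>
      have h1 : c 1 = b - 2 * a ^ 3 := by rw [hcrec 0, hc0]; ring
      rw [h1]
      exact ⟨hne, by rw [hord]; ring_nf⟩
    | succ n ih =>
      obtain ⟨hcn, hcord⟩ := ih
      have hpow : (1 : ℤ) ≤ 3 ^ n := one_le_pow₀ (by norm_num)
      -- x := (c (n+1))^3
      have hxne : (c (n + 1)) ^ 3 ≠ 0 := pow_ne_zero _ hcn
      have hxord : ((c (n + 1)) ^ 3).order = -(3 ^ (n + 1) * γ) := by
        rw [HahnSeries.order_pow (c (n+1)) 3, hcord]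
        push_cast
        ring
      -- order of 3 * a^2 * c (n+1)
      have ha2 : a ^ 2 ≠ 0 := pow_ne_zero _ ha
      have hmne : 3 * a ^ 2 * c (n + 1) ≠ 0 :=
        mul_ne_zero (mul_ne_zero h3ne ha2) hcn
      have hmord : (3 * a ^ 2 * c (n + 1)).order = 2 * a.order + -(3 ^ n * γ) := by
        rw [HahnSeries.order_mul (mul_ne_zero h3ne ha2) hcn,
          HahnSeries.order_mul h3ne ha2, HahnSeries.order_pow a 2, h3ord, hcord]
        push_cast
        ring
      have hps : (3 : ℤ) ^ (n + 1) = 3 ^ n * 3 := pow_succ 3 n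
      have hlt1 : -(3 ^ (n + 1) * γ) < (3 * a ^ 2 * c (n + 1)).order := by
        rw [hmord]
        rw [hps]
        have h5 : 3 * (-a.order) < 3 * (3 ^ n * γ) := by nlinarith
        linarith
      have hlt2 : -(3 ^ (n + 1) * γ) < b.order := by
        have : γ < 3 ^ (n + 1) * γ := by
          nlinarith [mul_nonneg (sub_nonneg.mpr hpow) hmax.le]
        omega
      -- y := b - 3 * a^2 * c (n+1)
      have hyord : (((c (n + 1)) ^ 3).orderTop : WithTop ℤ)
          < (b - 3 * a ^ 2 * c (n + 1)).orderTop := by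
        rw [← HahnSeries.order_eq_orderTop_of_ne_zero hxne, hxord, sub_eq_add_neg]
        refine lt_of_lt_of_le (lt_min ?_ ?_) HahnSeries.min_orderTop_le_orderTop_add
        · rw [← HahnSeries.order_eq_orderTop_of_ne_zero hb]
          exact_mod_cast hlt2
        · rw [HahnSeries.orderTop_neg, ← HahnSeries.order_eq_orderTop_of_ne_zero hmne]
          exact_mod_cast hlt1
      have hsum := stmt6_aux _ _ hxne hyord
      have heq : c (n + 1 + 1) = (c (n + 1)) ^ 3 + (b - 3 * a ^ 2 * c (n + 1)) := by
        rw [hcrec (n + 1)]; ring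
      rw [heq]
      exact ⟨hsum.1, by rw [hsum.2, hxord]⟩
  intro n hn
  obtain ⟨m, rfl⟩ : ∃ m, n = m + 1 := ⟨n - 1, by omega⟩
  obtain ⟨h1, h2⟩ := key m
  exact ⟨h1, by rw [h2]; simp⟩
end

section
/- The sequence of functions F_n : ℂ² → ℝ defined by F_n(a,b) := 3^{−n}·log⁺|f_{a,b}^n(a)| converges locally uniformly on ℂ² as n → ∞; consequently, the limit function G⁺(a,b) := lim_{n→∞} 3^{−n}·log⁺|f_{a,b}^n(a)| is continuous on ℂ². -/
open Filter

/-- `log⁺ x = max (log x) 0`. -/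
noncomputable def logPlus (x : ℝ) : ℝ := max (Real.log x) 0

lemma logPlus_nonneg (x : ℝ) : 0 ≤ logPlus x := le_max_right _ _

lemma logPlus_eq_log_max {x : ℝ} (hx : 0 ≤ x) : logPlus x = Real.log (max x 1) := by
  unfold logPlus
  rcases le_total x 1 with h | h
  · rw [max_eq_right h, Real.log_one, max_eq_right (Real.log_nonpos hx h)]
  · rw [max_eq_left h, max_eq_left (Real.log_nonneg h)]

lemma continuous_logPlus : Continuous logPlus := by
  rw [continuous_iff_continuousAt]
  intro x
  rcases eq_or_ne x 0 with rfl | hx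
  · have : logPlus =ᶠ[nhds (0:ℝ)] fun _ => 0 := by
      filter_upwards [Metric.ball_mem_nhds (0:ℝ) one_pos] with y hy
      simp only [Metric.mem_ball, Real.dist_eq, sub_zero] at hy
      rcases eq_or_ne y 0 with rfl | hy0
      · simp [logPlus]
      · have h1 : Real.log y < 0 := by
          rw [← Real.log_abs]
          exact Real.log_neg (abs_pos.mpr hy0) hy
        simp [logPlus, max_eq_right h1.le]
    exact continuousAt_const.congr this.symm
  · exact ((Real.continuousAt_log hx).max continuousAt_const)

/-- Key estimate, real-variable version. -/
lemma real_key {r A B X W : ℝ} (hr : 1 ≤ r) (hB0 : 0 ≤ B) (hX0 : 0 ≤ X) (hW0 : 0 ≤ W)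
    (hA2 : A ^ 2 ≤ r ^ 2) (hb : B ≤ r)
    (h1 : W ≤ X ^ 3 + 3 * A ^ 2 * X + B) (h2 : X ^ 3 ≤ W + 3 * A ^ 2 * X + B) :
    |logPlus W - 3 * logPlus X| ≤ 4 * Real.log (6 * r ^ 2) + Real.log 2 := by
  have hr0 : (0:ℝ) < r := lt_of_lt_of_le one_pos hr
  have hA20 : 0 ≤ A ^ 2 := sq_nonneg A
  have hL0 : 0 ≤ Real.log (6 * r ^ 2) := Real.log_nonneg (by nlinarith)
  have hlog2 : 0 ≤ Real.log 2 := Real.log_nonneg one_le_two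
  have hr2 : 1 ≤ r ^ 2 := by nlinarith
  set m := max X 1 with hm
  have hm1 : 1 ≤ m := le_max_right _ _
  have hXm : X ≤ m := le_max_left _ _
  have hm0 : 0 < m := lt_of_lt_of_le one_pos hm1
  rw [abs_le]
  constructor
  · -- lower bound
    rw [neg_le, ← sub_nonneg]
    rcases le_total X (6 * r ^ 2) with hcase | hcase
    · have h3 : logPlus X ≤ Real.log (6 * r ^ 2) := by
        rw [logPlus_eq_log_max hX0]
        exact Real.log_le_log hm0 (max_le hcase (by nlinarith))
      have := logPlus_nonneg W
      linarith
    · have hX1 : 1 ≤ X := le_trans (by nlinarith) hcase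
      have hX2 : (6 * r ^ 2) ^ 2 ≤ X ^ 2 := pow_le_pow_left₀ (by positivity) hcase 2
      have e1 : 8 * r ^ 2 * X ≤ X ^ 3 := by
        nlinarith [mul_le_mul_of_nonneg_right hX2 hX0, mul_nonneg (mul_nonneg hr0.le hr0.le) hX0]
      have e2 : r ≤ r ^ 2 * X := by
        nlinarith [mul_nonneg (sq_nonneg r) (sub_nonneg.mpr hX1)]
      have e3 : A ^ 2 * X ≤ r ^ 2 * X := mul_le_mul_of_nonneg_right hA2 hX0
      have hW2 : X ^ 3 / 2 ≤ W := by linarith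
      have h4 : 3 * Real.log X - Real.log 2 ≤ logPlus W := by
        calc 3 * Real.log X - Real.log 2 = Real.log (X ^ 3 / 2) := by
              rw [Real.log_div (by positivity) two_ne_zero, Real.log_pow]
              norm_num
          _ ≤ Real.log W := Real.log_le_log (by positivity) hW2
          _ ≤ logPlus W := le_max_left _ _
      have h5 : logPlus X = Real.log X := by
        rw [logPlus_eq_log_max hX0, max_eq_left hX1]
      rw [h5]
      linarith
  · -- upper bound
    have h6 : logPlus W ≤ Real.log (6 * r ^ 2) + 3 * logPlus X := by
      rw [logPlus_eq_log_max hW0, logPlus_eq_log_max hX0, ← hm]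
      have hX3 : X ^ 3 ≤ m ^ 3 := pow_le_pow_left₀ hX0 hXm 3
      have hm3 : 1 ≤ m ^ 3 := le_trans hm1 (le_self_pow₀ hm1 (by norm_num))
      have hXm3 : X ≤ m ^ 3 := le_trans hXm (le_self_pow₀ hm1 (by norm_num))
      have hm30 : 0 < m ^ 3 := by positivity
      have f2 : m ^ 3 ≤ r ^ 2 * m ^ 3 := le_mul_of_one_le_left hm30.le hr2
      have f3 : A ^ 2 * X ≤ r ^ 2 * m ^ 3 := mul_le_mul hA2 hXm3 hX0 (sq_nonneg r)
      have f5 : r ≤ r ^ 2 := le_self_pow₀ hr (by norm_num)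
      have f6 : r ^ 2 ≤ r ^ 2 * m ^ 3 := le_mul_of_one_le_right (by positivity) hm3
      have hWle : max W 1 ≤ 6 * r ^ 2 * m ^ 3 := max_le (by linarith) (by linarith)
      calc Real.log (max W 1) ≤ Real.log (6 * r ^ 2 * m ^ 3) :=
            Real.log_le_log (lt_of_lt_of_le one_pos (le_max_right _ _)) hWle
        _ = Real.log (6 * r ^ 2) + 3 * Real.log m := by
            rw [Real.log_mul (by positivity) (by positivity), Real.log_pow]
            norm_num
    linarith

/-- Key estimate: `|log⁺|f(z)| - 3 log⁺|z||` is bounded in terms of bounds on `a, b`. -/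
lemma key_est {r : ℝ} (hr : 1 ≤ r) {a b : ℂ} (ha : ‖a‖ ≤ r)
    (hb : ‖b‖ ≤ r) (z : ℂ) :
    |logPlus (‖fab a b z‖) - 3 * logPlus (‖z‖)|
      ≤ 4 * Real.log (6 * r ^ 2) + Real.log 2 := by
  have hA2 : ‖a‖ ^ 2 ≤ r ^ 2 := pow_le_pow_left₀ (norm_nonneg a) ha 2
  have h1 : ‖fab a b z‖
      ≤ ‖z‖ ^ 3 + 3 * ‖a‖ ^ 2 * ‖z‖ + ‖b‖ := by
    calc ‖fab a b z‖ = ‖(z ^ 3 - 3 * a ^ 2 * z) + b‖ := rfl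
      _ ≤ ‖z ^ 3 - 3 * a ^ 2 * z‖ + ‖b‖ := norm_add_le _ _
      _ ≤ (‖z ^ 3‖ + ‖3 * a ^ 2 * z‖) + ‖b‖ := by gcongr; exact norm_sub_le _ _
      _ = ‖z‖ ^ 3 + 3 * ‖a‖ ^ 2 * ‖z‖ + ‖b‖ := by simp [norm_mul, norm_pow]
  have h2 : ‖z‖ ^ 3
      ≤ ‖fab a b z‖ + 3 * ‖a‖ ^ 2 * ‖z‖ + ‖b‖ := by
    have e : z ^ 3 = fab a b z + (3 * a ^ 2 * z - b) := by unfold fab; ring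
    calc ‖z‖ ^ 3 = ‖z ^ 3‖ := (norm_pow z 3).symm
      _ = ‖fab a b z + (3 * a ^ 2 * z - b)‖ := by rw [← e]
      _ ≤ ‖fab a b z‖ + ‖3 * a ^ 2 * z - b‖ := norm_add_le _ _
      _ ≤ ‖fab a b z‖ + (‖3 * a ^ 2 * z‖ + ‖b‖) := by gcongr; exact norm_sub_le _ _
      _ = ‖fab a b z‖ + 3 * ‖a‖ ^ 2 * ‖z‖ + ‖b‖ := by simp [norm_mul, norm_pow]; ring
  exact real_key hr (norm_nonneg b) (norm_nonneg z) (norm_nonneg _)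
    hA2 hb h1 h2

lemma aux_step (c x0 x1 : ℝ) (n : ℕ) (h : |x1 - 3 * x0| ≤ c) :
    |((3:ℝ) ^ (n+1))⁻¹ * x1 - ((3:ℝ) ^ n)⁻¹ * x0| ≤ c * ((3:ℝ) ^ (n+1))⁻¹ := by
  have h3 : ((3:ℝ) ^ n)⁻¹ = 3 * ((3:ℝ) ^ (n+1))⁻¹ := by
    rw [pow_succ]; field_simp
  have e : ((3:ℝ) ^ (n+1))⁻¹ * x1 - ((3:ℝ) ^ n)⁻¹ * x0
      = ((3:ℝ) ^ (n+1))⁻¹ * (x1 - 3 * x0) := by rw [h3]; ring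
  rw [e, abs_mul, abs_of_pos (by positivity : (0:ℝ) < ((3:ℝ) ^ (n+1))⁻¹), mul_comm]
  exact mul_le_mul_of_nonneg_right h (by positivity)

/-- Bound on the increments of the sequence. -/
lemma step_bound {r : ℝ} (hr : 1 ≤ r) {a b : ℂ} (ha : ‖a‖ ≤ r)
    (hb : ‖b‖ ≤ r) (n : ℕ) :
    |((3:ℝ) ^ (n+1))⁻¹ * logPlus (‖(fab a b)^[n+1] a‖)
      - ((3:ℝ) ^ n)⁻¹ * logPlus (‖(fab a b)^[n] a‖)|
      ≤ (4 * Real.log (6 * r ^ 2) + Real.log 2) * ((3:ℝ) ^ (n+1))⁻¹ := by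
  rw [Function.iterate_succ_apply']
  exact aux_step _ _ _ n (key_est hr ha hb ((fab a b)^[n] a))

lemma continuous_iter (n : ℕ) : Continuous fun p : ℂ × ℂ => (fab p.1 p.2)^[n] p.1 := by
  induction n with
  | zero => simpa using continuous_fst
  | succ n ih =>
      simp_rw [Function.iterate_succ_apply']
      unfold fab
      exact ((ih.pow 3).sub ((continuous_const.mul (continuous_fst.pow 2)).mul ih)).add
        continuous_snd

theorem stmt9 :
    ∃ G : ℂ × ℂ → ℝ,
      TendstoLocallyUniformly
        (fun (n : ℕ) (p : ℂ × ℂ) =>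
          ((3 : ℝ) ^ n)⁻¹ * logPlus ‖(fab p.1 p.2)^[n] p.1‖)
        G atTop ∧ Continuous G := by
  set F : ℕ → ℂ × ℂ → ℝ := fun n p =>
    ((3 : ℝ) ^ n)⁻¹ * logPlus (‖(fab p.1 p.2)^[n] p.1‖) with hFdef
  have hFcont : ∀ n, Continuous (F n) := fun n =>
    continuous_const.mul (continuous_logPlus.comp (continuous_norm.comp (continuous_iter n)))
  have hmain : TendstoLocallyUniformly F (fun p => F 0 p + ∑' n, (F (n+1) p - F n p)) atTop := by
    rw [tendstoLocallyUniformly_iff_forall_isCompact]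
    intro K hK
    obtain ⟨r₀, hr₀⟩ := hK.isBounded.subset_closedBall 0
    set r : ℝ := max 1 r₀ with hrdef
    have hr : 1 ≤ r := le_max_left _ _
    set C : ℝ := 4 * Real.log (6 * r ^ 2) + Real.log 2 with hCdef
    have hbound : ∀ n, ∀ p ∈ K, ‖F (n+1) p - F n p‖ ≤ C * ((3:ℝ) ^ (n+1))⁻¹ := by
      intro n p hp
      have hpr : ‖p‖ ≤ r := le_trans (by simpa using hr₀ hp) (le_max_right _ _)
      have ha : ‖p.1‖ ≤ r := le_trans (norm_fst_le p) hpr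
      have hb : ‖p.2‖ ≤ r := le_trans (norm_snd_le p) hpr
      have := step_bound hr ha hb n
      simpa only [hFdef, Real.norm_eq_abs] using this
    have hu : Summable (fun n : ℕ => C * ((3:ℝ) ^ (n+1))⁻¹) := by
      have : (fun n : ℕ => C * ((3:ℝ) ^ (n+1))⁻¹)
          = fun n : ℕ => (C * 3⁻¹) * (3⁻¹ : ℝ) ^ n := by
        funext n
        rw [← inv_pow, pow_succ]
        ring
      rw [this]
      exact (summable_geometric_of_lt_one (by norm_num) (by norm_num)).mul_left _
    have htsum := tendstoUniformlyOn_tsum_nat hu hbound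
    have hconst : TendstoUniformlyOn (fun _ : ℕ => fun p => F 0 p) (fun p => F 0 p) atTop K :=
      fun u hu => Eventually.of_forall fun n x _ => refl_mem_uniformity hu
    have hadd := hconst.add htsum
    have heq : (fun n : ℕ => fun p => F 0 p) + (fun N p => ∑ n ∈ Finset.range N, (F (n+1) p - F n p)) = F := by
      funext N p
      simp only [Pi.add_apply]
      rw [Finset.sum_range_sub (fun n => F n p)]
      ring
    rwa [heq] at hadd
  exact ⟨_, hmain, hmain.continuous (Eventually.of_forall hFcont).frequently⟩
end

section
/- In the meromorphic setting, suppose that every c_n is not identically zero and that γ_n → +∞ as n → ∞. Then there exists 0 < r < r₀ such that the sequence of functions t ↦ 3^{−n}·log|t^{γ_n}·c_n(t)| converges uniformly on the punctured disk {0 < |t| < r} as n → ∞ (for each sufficiently large n, the function t^{γ_n}·c_n(t) extends holomorphically and non-vanishing across 0, so these functions extend continuously to {|t| < r}). -/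
open Filter Metric Topology

/-- `g` is meromorphic at `0` with order of vanishing `d ∈ ℤ` (negative for a pole):
near `0` (but off `0`) we have `g t = t ^ d · u t` with `u` analytic and nonvanishing
at `0`. -/
def HasOrdAtZero (g : ℂ → ℂ) (d : ℤ) : Prop :=
  ∃ u : ℂ → ℂ, AnalyticAt ℂ u 0 ∧ u 0 ≠ 0 ∧
    ∀ᶠ t in nhdsWithin (0 : ℂ) {0}ᶜ, g t = t ^ d * u t

/-- Meromorphic at `0`: some order, or identically zero near `0`. -/
def MeroAtZero (g : ℂ → ℂ) : Prop :=
  (∃ d : ℤ, HasOrdAtZero g d) ∨ ∀ᶠ t in nhdsWithin (0 : ℂ) {0}ᶜ, g t = 0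

lemma ev_ne : ∀ᶠ t in 𝓝[≠] (0:ℂ), t ≠ 0 := by
  filter_upwards [self_mem_nhdsWithin] with t ht using ht

lemma zpow_tendsto {k : ℤ} (hk : 1 ≤ k) :
    Filter.Tendsto (fun t : ℂ => t ^ k) (𝓝[≠] (0:ℂ)) (𝓝 0) := by
  have h1 : (fun t : ℂ => t ^ (k.toNat : ℕ)) =ᶠ[𝓝[≠] (0:ℂ)] (fun t : ℂ => t ^ k) := by
    filter_upwards [ev_ne] with t ht
    rw [← zpow_natCast, Int.toNat_of_nonneg (by omega)]
  refine Tendsto.congr' h1 ?_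
  have : Tendsto (fun t : ℂ => t ^ (k.toNat : ℕ)) (𝓝 (0:ℂ)) (𝓝 ((0:ℂ) ^ (k.toNat : ℕ))) :=
    (continuous_pow k.toNat).tendsto 0
  rw [zero_pow (by omega)] at this
  exact this.mono_left nhdsWithin_le_nhds

lemma zpow_norm_tendsto {k : ℤ} (hk : 1 ≤ k) :
    Filter.Tendsto (fun t : ℂ => ‖t ^ k‖) (𝓝[≠] (0:ℂ)) (𝓝 0) := by
  simpa using (zpow_tendsto hk).norm

lemma mero_small (g : ℂ → ℂ) (hg : MeroAtZero g) :
    ∃ d : ℤ, ∀ k : ℤ, d ≤ k → Filter.Tendsto (fun t => t ^ k * g t) (𝓝[≠] (0:ℂ)) (𝓝 0) := by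
  rcases hg with ⟨e, u, hu, hu0, heq⟩ | hzero
  · refine ⟨1 - e, fun k hk => ?_⟩
    have h1 : (fun t : ℂ => t ^ (k + e) * u t) =ᶠ[𝓝[≠] (0:ℂ)] (fun t => t ^ k * g t) := by
      filter_upwards [ev_ne, heq] with t ht hg'
      rw [hg', zpow_add₀ ht, mul_assoc]
    refine Tendsto.congr' h1 ?_
    have h2 : Tendsto (fun t : ℂ => t ^ (k + e)) (𝓝[≠] (0:ℂ)) (𝓝 0) := zpow_tendsto (by omega)
    have h3 : Tendsto u (𝓝[≠] (0:ℂ)) (𝓝 (u 0)) :=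
      (hu.continuousAt.tendsto).mono_left nhdsWithin_le_nhds
    simpa using h2.mul h3
  · refine ⟨0, fun k _ => ?_⟩
    have h1 : (fun _ : ℂ => (0:ℂ)) =ᶠ[𝓝[≠] (0:ℂ)] (fun t => t ^ k * g t) := by
      filter_upwards [hzero] with t ht; rw [ht, mul_zero]
    exact Tendsto.congr' h1 tendsto_const_nhds

lemma ord_eq_zero (g : ℂ → ℂ) (e : ℤ) (u : ℂ → ℂ) (hu : AnalyticAt ℂ u 0) (hu0 : u 0 ≠ 0)
    (heq : ∀ᶠ t in 𝓝[≠] (0:ℂ), g t = t ^ e * u t) (L U : ℝ) (hL : 0 < L)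
    (hbd : ∀ᶠ t in 𝓝[≠] (0:ℂ), L ≤ ‖g t‖ ∧ ‖g t‖ ≤ U) : e = 0 := by
  have hucont : Tendsto u (𝓝[≠] (0:ℂ)) (𝓝 (u 0)) :=
    (hu.continuousAt.tendsto).mono_left nhdsWithin_le_nhds
  rcases lt_trichotomy e 0 with he | he | he
  · exfalso
    have h1 : Tendsto (fun t : ℂ => ‖t ^ (-e)‖ * ‖g t‖) (𝓝[≠] (0:ℂ)) (𝓝 0) := by
      have key : Tendsto (fun t : ℂ => ‖t ^ (-e)‖ * U) (𝓝[≠] (0:ℂ)) (𝓝 0) := by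
        simpa using (zpow_norm_tendsto (by omega : 1 ≤ -e)).mul_const U
      refine squeeze_zero' ?_ ?_ key
      · filter_upwards with t; positivity
      · filter_upwards [hbd] with t ht
        exact mul_le_mul_of_nonneg_left ht.2 (norm_nonneg _)
    have h3 : (fun t : ℂ => ‖t ^ (-e)‖ * ‖g t‖) =ᶠ[𝓝[≠] (0:ℂ)] (fun t => ‖u t‖) := by
      filter_upwards [ev_ne, heq] with t ht hg'
      rw [hg', ← norm_mul, ← mul_assoc, ← zpow_add₀ ht]
      simp
    rw [tendsto_congr' h3] at h1
    have huz : ‖u 0‖ = 0 := tendsto_nhds_unique hucont.norm h1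
    exact hu0 (norm_eq_zero.mp huz)
  · exact he
  · exfalso
    have h1 : Tendsto (fun t : ℂ => ‖g t‖) (𝓝[≠] (0:ℂ)) (𝓝 0) := by
      have h2 : Tendsto (fun t : ℂ => ‖t ^ e‖ * ‖u t‖) (𝓝[≠] (0:ℂ)) (𝓝 0) := by
        simpa using (zpow_norm_tendsto (by omega : 1 ≤ e)).mul hucont.norm
      refine h2.congr' ?_
      filter_upwards [heq] with t hg'
      rw [hg', norm_mul]
    have h4 : L ≤ 0 := ge_of_tendsto h1 (by filter_upwards [hbd] with t ht using ht.1)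
    linarith

set_option maxHeartbeats 1000000 in
theorem stmt11 (r₀ : ℝ) (hr₀ : 0 < r₀) (a b : ℂ → ℂ)
    (ha : DifferentiableOn ℂ a (ball 0 r₀ \ {0}))
    (hb : DifferentiableOn ℂ b (ball 0 r₀ \ {0}))
    (hamero : MeroAtZero a) (hbmero : MeroAtZero b)
    (c : ℕ → ℂ → ℂ) (hc0 : ∀ t, c 0 t = a t)
    (hcrec : ∀ n t, c (n + 1) t = (c n t) ^ 3 - 3 * (a t) ^ 2 * (c n t) + b t)
    (γ : ℕ → ℤ) (hγ : ∀ n, HasOrdAtZero (c n) (-(γ n)))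
    (hγtop : Tendsto γ atTop atTop) :
    ∃ r : ℝ, 0 < r ∧ r < r₀ ∧ ∃ g : ℂ → ℝ,
      TendstoUniformlyOn
        (fun (n : ℕ) (t : ℂ) =>
          ((3 : ℝ) ^ n)⁻¹ * Real.log ‖t ^ (γ n) * c n t‖)
        g atTop {t : ℂ | 0 < ‖t‖ ∧ ‖t‖ < r} := by
  classical
  obtain ⟨u, huan, hune, hueq⟩ :
      ∃ u : ℕ → ℂ → ℂ, (∀ n, AnalyticAt ℂ (u n) 0) ∧ (∀ n, u n 0 ≠ 0) ∧
        ∀ n, ∀ᶠ t in 𝓝[≠] (0:ℂ), c n t = t ^ (-(γ n)) * u n t := by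
    choose u h1 h2 h3 using hγ
    exact ⟨u, h1, h2, h3⟩
  obtain ⟨da, hda⟩ := mero_small a hamero
  obtain ⟨db, hdb⟩ := mero_small b hbmero
  obtain ⟨N, hN⟩ := (hγtop.eventually_ge_atTop (max (max da db) 1)).exists
  -- unit norm bounds
  have hub : ∀ n, ∀ᶠ t in 𝓝[≠] (0:ℂ), ‖u n 0‖/2 < ‖u n t‖ ∧ ‖u n t‖ < 2*‖u n 0‖ := by
    intro n
    have hm : 0 < ‖u n 0‖ := norm_pos_iff.mpr (hune n)
    have h : Tendsto (fun t => ‖u n t‖) (𝓝 (0:ℂ)) (𝓝 (‖u n 0‖)) :=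
      (huan n).continuousAt.norm.tendsto
    have h1 := h.eventually (eventually_gt_nhds (by linarith : ‖u n 0‖/2 < ‖u n 0‖))
    have h2 := h.eventually (eventually_lt_nhds (by linarith : ‖u n 0‖ < 2*‖u n 0‖))
    exact (h1.and h2).filter_mono nhdsWithin_le_nhds
  -- the basic estimate at level N, eventually near 0
  have E1 : ∀ᶠ t in 𝓝[≠] (0:ℂ), 1 ≤ ‖c N t‖ ∧ 2 * (3 * ‖a t‖^2 + ‖b t‖) + 2 ≤ ‖c N t‖^2 := by
    set m : ℝ := ‖u N 0‖ with hmdef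
    have hm : 0 < m := norm_pos_iff.mpr (hune N)
    have hsmall : Tendsto (fun t : ℂ => (2 * (3 * ‖a t‖^2 + ‖b t‖) + 2) * ‖t ^ (γ N)‖^2) (𝓝[≠] (0:ℂ)) (𝓝 0) := by
      have hxa : Tendsto (fun t : ℂ => ‖t ^ (γ N) * a t‖) (𝓝[≠] (0:ℂ)) (𝓝 0) := by
        simpa using (hda (γ N) (by omega)).norm
      have hxb : Tendsto (fun t : ℂ => ‖t ^ (γ N) * b t‖) (𝓝[≠] (0:ℂ)) (𝓝 0) := by
        simpa using (hdb (γ N) (by omega)).norm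
      have hs : Tendsto (fun t : ℂ => ‖t ^ (γ N)‖) (𝓝[≠] (0:ℂ)) (𝓝 0) :=
        zpow_norm_tendsto (by omega)
      have heq : ∀ t : ℂ, (2 * (3 * ‖a t‖^2 + ‖b t‖) + 2) * ‖t ^ (γ N)‖^2 =
          6 * (‖t ^ (γ N) * a t‖ * ‖t ^ (γ N) * a t‖)
            + (2 * (‖t ^ (γ N)‖ * ‖t ^ (γ N) * b t‖) + 2 * (‖t ^ (γ N)‖ * ‖t ^ (γ N)‖)) := by
        intro t
        simp only [norm_mul]
        ring
      rw [tendsto_congr heq]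
      have := (((hxa.mul hxa).const_mul 6).add
        (((hs.mul hxb).const_mul 2).add ((hs.mul hs).const_mul 2)))
      simpa using this
    have hlt := hsmall.eventually (eventually_lt_nhds (by positivity : (0:ℝ) < (m/2)^2))
    filter_upwards [ev_ne, hueq N, hub N, hlt] with t ht hct hu2 hsm
    have hs : (0:ℝ) < ‖t ^ (γ N)‖ := by
      rw [norm_pos_iff]
      exact zpow_ne_zero _ ht
    have hxw : ‖t ^ (γ N)‖ * ‖c N t‖ = ‖u N t‖ := by
      rw [← norm_mul, hct, ← mul_assoc, ← zpow_add₀ ht]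
      simp
    have hw : m/2 < ‖u N t‖ := hu2.1
    have hx0 : 0 ≤ ‖c N t‖ := norm_nonneg _
    have hw2 : (m/2)^2 < ‖t ^ (γ N)‖^2 * ‖c N t‖^2 := by
      have h5 : (‖t ^ (γ N)‖ * ‖c N t‖)^2 = ‖t ^ (γ N)‖^2 * ‖c N t‖^2 := by ring
      nlinarith [hw, hm]
    have h2 : 2 * (3 * ‖a t‖^2 + ‖b t‖) + 2 ≤ ‖c N t‖^2 := by
      by_contra hcon
      push_neg at hcon
      have h6 : ‖c N t‖^2 * ‖t ^ (γ N)‖^2 < (2 * (3 * ‖a t‖^2 + ‖b t‖) + 2) * ‖t ^ (γ N)‖^2 :=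
        mul_lt_mul_of_pos_right hcon (by positivity)
      linarith
    exact ⟨by nlinarith [norm_nonneg (a t), norm_nonneg (b t)], h2⟩
  -- extract a radius
  obtain ⟨ε, hε, hball⟩ : ∃ ε > 0, ∀ t : ℂ, ‖t‖ < ε → t ≠ 0 →
      1 ≤ ‖c N t‖ ∧ 2 * (3 * ‖a t‖^2 + ‖b t‖) + 2 ≤ ‖c N t‖^2 := by
    rw [eventually_nhdsWithin_iff, Metric.eventually_nhds_iff] at E1
    obtain ⟨ε, hε, h⟩ := E1
    exact ⟨ε, hε, fun t ht ht0 => h (by simpa [dist_eq_norm] using ht) ht0⟩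
  set r : ℝ := min ε r₀ / 2 with hrdef
  have hr : 0 < r := by positivity
  have hrr₀ : r < r₀ := by
    have h := min_le_right ε r₀
    rw [hrdef]; linarith
  have hrε : r < ε := by
    have h := min_le_left ε r₀
    rw [hrdef]; linarith
  -- the invariant
  have hinv : ∀ t : ℂ, t ≠ 0 → ‖t‖ < r → ∀ k, N ≤ k →
      1 ≤ ‖c k t‖ ∧ 2 * (3 * ‖a t‖^2 + ‖b t‖) + 2 ≤ ‖c k t‖^2 := by
    intro t ht htr k hk
    induction k, hk using Nat.le_induction with
    | base => exact hball t (by linarith) ht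
    | succ k hk ih =>
      obtain ⟨hx1, hx2⟩ := ih
      have htri : ‖c k t‖^3 - (3 * ‖a t‖^2 * ‖c k t‖ + ‖b t‖) ≤ ‖c (k+1) t‖ := by
        have h1 : ‖c (k+1) t - (c k t)^3‖ ≤ 3 * ‖a t‖^2 * ‖c k t‖ + ‖b t‖ := by
          have : c (k+1) t - (c k t)^3 = -(3 * (a t)^2 * (c k t)) + b t := by
            rw [hcrec k t]; ring
          rw [this]
          calc ‖-(3 * (a t)^2 * (c k t)) + b t‖
              ≤ ‖-(3 * (a t)^2 * (c k t))‖ + ‖b t‖ := norm_add_le _ _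
            _ = 3 * ‖a t‖^2 * ‖c k t‖ + ‖b t‖ := by
                rw [norm_neg, norm_mul, norm_mul, norm_pow]
                norm_num
        have h2 : ‖(c k t)^3‖ - ‖c (k+1) t - (c k t)^3‖ ≤ ‖c (k+1) t‖ := by
          have := norm_sub_norm_le ((c k t)^3) ((c k t)^3 - c (k+1) t)
          simp only [sub_sub_cancel] at this
          calc ‖(c k t)^3‖ - ‖c (k+1) t - (c k t)^3‖
              = ‖(c k t)^3‖ - ‖(c k t)^3 - c (k+1) t‖ := by rw [norm_sub_rev]
            _ ≤ ‖c (k+1) t‖ := this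
        rw [norm_pow] at h2
        linarith
      have hy : ‖c k t‖ ≤ ‖c (k+1) t‖ := by
        nlinarith [norm_nonneg (a t), norm_nonneg (b t),
          mul_le_mul_of_nonneg_right hx2 (by positivity : (0:ℝ) ≤ ‖c k t‖),
          mul_le_mul_of_nonneg_left hx1 (norm_nonneg (b t)),
          mul_nonneg (mul_nonneg (by norm_num : (0:ℝ) ≤ 3)
            (pow_nonneg (norm_nonneg (a t)) 2)) (le_trans zero_le_one hx1)]
      have hxy2 : ‖c k t‖ * ‖c k t‖ ≤ ‖c (k+1) t‖ * ‖c (k+1) t‖ :=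
        mul_le_mul hy hy (by linarith) (by linarith)
      exact ⟨by linarith, by nlinarith [hxy2, hx2]⟩
  -- the key half-bound
  have hkey : ∀ t : ℂ, t ≠ 0 → ‖t‖ < r → ∀ k, N ≤ k →
      ‖c (k+1) t - (c k t)^3‖ ≤ (1/2) * ‖c k t‖^3 := by
    intro t ht htr k hk
    obtain ⟨hx1, hx2⟩ := hinv t ht htr k hk
    have h1 : ‖c (k+1) t - (c k t)^3‖ ≤ 3 * ‖a t‖^2 * ‖c k t‖ + ‖b t‖ := by
      have : c (k+1) t - (c k t)^3 = -(3 * (a t)^2 * (c k t)) + b t := by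
        rw [hcrec k t]; ring
      rw [this]
      calc ‖-(3 * (a t)^2 * (c k t)) + b t‖
          ≤ ‖-(3 * (a t)^2 * (c k t))‖ + ‖b t‖ := norm_add_le _ _
        _ = 3 * ‖a t‖^2 * ‖c k t‖ + ‖b t‖ := by
          rw [norm_neg, norm_mul, norm_mul, norm_pow]
          norm_num
    nlinarith [norm_nonneg (a t), norm_nonneg (b t),
      mul_le_mul_of_nonneg_right hx2 (by positivity : (0:ℝ) ≤ ‖c k t‖),
      mul_le_mul_of_nonneg_left hx1 (norm_nonneg (b t)),
      mul_nonneg (mul_nonneg (by norm_num : (0:ℝ) ≤ 3)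
        (pow_nonneg (norm_nonneg (a t)) 2)) (le_trans zero_le_one hx1)]
  -- the order relation
  have hγrel : ∀ k, N ≤ k → γ (k+1) = 3 * γ k := by
    intro k hk
    set m : ℝ := ‖u k 0‖ with hmdef
    have hm : 0 < m := norm_pos_iff.mpr (hune k)
    have hevr : ∀ᶠ t in 𝓝[≠] (0:ℂ), ‖t‖ < r := by
      have : ∀ᶠ t in 𝓝 (0:ℂ), ‖t‖ < r := by
        filter_upwards [Metric.ball_mem_nhds (0:ℂ) hr] with t ht
        simpa [dist_eq_norm] using ht
      exact this.filter_mono nhdsWithin_le_nhds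
    have heq : ∀ᶠ t in 𝓝[≠] (0:ℂ),
        t ^ (3 * γ k) * c (k+1) t = t ^ (3 * γ k + -(γ (k+1))) * u (k+1) t := by
      filter_upwards [ev_ne, hueq (k+1)] with t ht hct
      rw [hct, zpow_add₀ ht, mul_assoc]
    have hbd : ∀ᶠ t in 𝓝[≠] (0:ℂ),
        (1/2) * (m/2)^3 ≤ ‖t ^ (3 * γ k) * c (k+1) t‖ ∧
        ‖t ^ (3 * γ k) * c (k+1) t‖ ≤ (3/2) * (2*m)^3 := by
      filter_upwards [ev_ne, hevr, hueq k, hub k] with t ht htr hct hu2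
      have hs : (0:ℝ) < ‖t ^ (γ k)‖ := by
        rw [norm_pos_iff]; exact zpow_ne_zero _ ht
      have hxw : ‖t ^ (γ k)‖ * ‖c k t‖ = ‖u k t‖ := by
        rw [← norm_mul, hct, ← mul_assoc, ← zpow_add₀ ht]
        simp
      have hc1 : ‖c (k+1) t - (c k t)^3‖ ≤ (1/2) * ‖c k t‖^3 := hkey t ht htr k hk
      have hcu : ‖c (k+1) t‖ ≤ (3/2) * ‖c k t‖^3 := by
        have := norm_add_le ((c (k+1) t - (c k t)^3)) ((c k t)^3)
        simp only [sub_add_cancel] at this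
        rw [norm_pow] at this
        linarith
      have hcl : (1/2) * ‖c k t‖^3 ≤ ‖c (k+1) t‖ := by
        have h2 := norm_sub_norm_le ((c k t)^3) ((c k t)^3 - c (k+1) t)
        simp only [sub_sub_cancel] at h2
        rw [norm_sub_rev] at hc1
        rw [norm_pow] at h2
        linarith
      have hn3 : ‖t ^ (3 * γ k) * c (k+1) t‖ = ‖t ^ (γ k)‖^3 * ‖c (k+1) t‖ := by
        rw [norm_mul]
        congr 1
        rw [mul_comm (3:ℤ), zpow_mul]
        norm_cast
        rw [norm_pow]
      rw [hn3]
      have hw1 : m/2 < ‖u k t‖ := hu2.1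
      have hw2 : ‖u k t‖ < 2*m := hu2.2
      have hsx : ‖t ^ (γ k)‖^3 * ‖c k t‖^3 = ‖u k t‖^3 := by
        rw [← hxw]; ring
      have hw3 : (m/2)^3 < ‖u k t‖^3 :=
        pow_lt_pow_left₀ hw1 (by positivity) (by norm_num)
      have hw4 : ‖u k t‖^3 < (2*m)^3 :=
        pow_lt_pow_left₀ hw2 (norm_nonneg _) (by norm_num)
      have hs3 : (0:ℝ) ≤ ‖t ^ (γ k)‖^3 := by positivity
      have hml := mul_le_mul_of_nonneg_left hcl hs3
      have hmu := mul_le_mul_of_nonneg_left hcu hs3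
      constructor
      · linarith [hml, hw3, hsx]
      · linarith [hmu, hw4, hsx]
    have := ord_eq_zero (fun t => t ^ (3 * γ k) * c (k+1) t) (3 * γ k + -(γ (k+1)))
      (u (k+1)) (huan (k+1)) (hune (k+1)) heq ((1/2) * (m/2)^3) ((3/2) * (2*m)^3)
      (by positivity) hbd
    omega
  -- difference estimate
  set f : ℕ → ℂ → ℝ := fun n t => ((3 : ℝ) ^ n)⁻¹ * Real.log ‖t ^ (γ n) * c n t‖
    with hfdef
  have hdiff : ∀ t : ℂ, t ≠ 0 → ‖t‖ < r → ∀ k, N ≤ k →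
      dist (f k t) (f (k+1) t) ≤ ((3:ℝ) ^ (k+1))⁻¹ := by
    intro t ht htr k hk
    have hck : c k t ≠ 0 := by
      intro h
      have := (hinv t ht htr k hk).1
      rw [h] at this; simp at this; linarith
    set X : ℂ := t ^ (γ k) * c k t with hXdef
    set ρ : ℂ := c (k+1) t / (c k t)^3 with hρdef
    have hX0 : X ≠ 0 := mul_ne_zero (zpow_ne_zero _ ht) hck
    have hρval : ‖ρ - 1‖ ≤ 1/2 := by
      have : ρ - 1 = (c (k+1) t - (c k t)^3) / (c k t)^3 := by
        rw [hρdef]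
        field_simp
      rw [this, norm_div, norm_pow]
      have h1 := hkey t ht htr k hk
      have h2 : (0:ℝ) < ‖c k t‖^3 := pow_pos (norm_pos_iff.mpr hck) 3
      rw [div_le_iff₀ h2]
      linarith
    have hρl : 1/2 ≤ ‖ρ‖ := by
      have := norm_sub_norm_le (ρ - 1 + 1) (1:ℂ)
      simp only [sub_add_cancel, norm_one] at this
      have h3 : ‖ρ - 1 + 1‖ ≤ ‖ρ - 1‖ + 1 := by
        simpa using norm_add_le (ρ - 1) (1:ℂ)
      -- ‖ρ‖ ≥ 1 - ‖ρ - 1‖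
      have h4 : (1:ℝ) - ‖ρ - 1‖ ≤ ‖ρ‖ := by
        have := norm_sub_norm_le (1:ℂ) (1 - ρ)
        simp only [sub_sub_cancel, norm_one] at this
        rw [norm_sub_rev] at this
        linarith [this]
      linarith
    have hρu : ‖ρ‖ ≤ 3/2 := by
      have h5 : ‖ρ‖ ≤ ‖ρ - 1‖ + ‖(1:ℂ)‖ := by
        simpa using norm_add_le (ρ - 1) (1:ℂ)
      simp only [norm_one] at h5
      linarith
    have hρ0 : ρ ≠ 0 := by
      intro h
      rw [h] at hρl; simp at hρl; linarith
    have hsplit : t ^ (γ (k+1)) * c (k+1) t = X^3 * ρ := by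
      rw [hγrel k hk]
      have ht3 : t ^ (3 * γ k) = (t ^ (γ k))^(3:ℕ) := by
        rw [mul_comm, zpow_mul]; norm_cast
      have hck3 : (c k t)^(3:ℕ) ≠ 0 := pow_ne_zero _ hck
      rw [ht3, hXdef, hρdef, mul_pow, mul_assoc,
        mul_div_assoc', mul_div_cancel_left₀ _ hck3]
    have hlog : Real.log ‖t ^ (γ (k+1)) * c (k+1) t‖ =
        3 * Real.log ‖X‖ + Real.log ‖ρ‖ := by
      have hXabs : ‖X‖ ≠ 0 := by
        exact norm_ne_zero_iff.mpr hX0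
      have hρabs : ‖ρ‖ ≠ 0 := by
        exact norm_ne_zero_iff.mpr hρ0
      rw [hsplit, norm_mul, norm_pow]
      rw [Real.log_mul (pow_ne_zero 3 hXabs) hρabs, Real.log_pow]
      push_cast
      ring
    have hdiffeq : f (k+1) t - f k t = ((3:ℝ) ^ (k+1))⁻¹ * Real.log ‖ρ‖ := by
      simp only [hfdef, hlog]
      rw [hXdef, pow_succ]
      have h9 : ((3:ℝ)^k) ≠ 0 := by positivity
      field_simp
      ring
    have hlogbd : |Real.log ‖ρ‖| ≤ 1 := by
      have habs : ‖ρ‖ = ‖ρ‖ := rfl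
      rw [habs, abs_le]
      have hlog2 : Real.log 2 ≤ 1 := by
        have := Real.log_le_sub_one_of_pos (by norm_num : (0:ℝ) < 2)
        linarith
      constructor
      · have h1 : Real.log (1/2) ≤ Real.log ‖ρ‖ := Real.log_le_log (by norm_num) hρl
        rw [one_div, Real.log_inv] at h1
        linarith
      · have h2 : Real.log ‖ρ‖ ≤ Real.log 2 := Real.log_le_log (by linarith) (by linarith)
        linarith
    rw [dist_comm, Real.dist_eq, hdiffeq, abs_mul, abs_inv, abs_pow]
    have h3 : |(3:ℝ)| = 3 := by norm_num
    rw [h3]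
    calc ((3:ℝ) ^ (k+1))⁻¹ * |Real.log ‖ρ‖|
        ≤ ((3:ℝ) ^ (k+1))⁻¹ * 1 := by
          apply mul_le_mul_of_nonneg_left hlogbd (by positivity)
      _ = ((3:ℝ) ^ (k+1))⁻¹ := by ring
  -- build the limit function
  set S : Set ℂ := {t : ℂ | 0 < ‖t‖ ∧ ‖t‖ < r} with hSdef
  have hmemS : ∀ t ∈ S, t ≠ 0 ∧ ‖t‖ < r := by
    intro t ht
    obtain ⟨h1, h2⟩ := ht
    constructor
    · simpa [norm_pos_iff] using h1
    · simpa using h2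
  have hfull : ∀ t ∈ S, Tendsto (fun n => f n t) atTop
      (𝓝 (limUnder atTop (fun n => f n t))) := by
    intro t ht
    obtain ⟨ht0, htr⟩ := hmemS t ht
    have hC : CauchySeq (fun n => f (N + n) t) := by
      apply cauchySeq_of_le_geometric (1/3) (((3:ℝ)^N)⁻¹ * (1/3)) (by norm_num)
      intro n
      have h1 := hdiff t ht0 htr (N + n) (Nat.le_add_right _ _)
      have h2 : ((3:ℝ) ^ (N + n + 1))⁻¹ = ((3:ℝ)^N)⁻¹ * (1/3) * (1/3)^n := by
        rw [pow_add, pow_add, mul_inv, mul_inv]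
        norm_num
        rw [one_div, inv_pow]; ring
      exact le_of_le_of_eq h1 h2
    have htail : Tendsto (fun n => f (N + n) t) atTop
        (𝓝 (limUnder atTop (fun n => f (N + n) t))) := hC.tendsto_limUnder
    have htail' : Tendsto (fun n => f (n + N) t) atTop
        (𝓝 (limUnder atTop (fun n => f (N + n) t))) := by
      refine htail.congr (fun n => by rw [Nat.add_comm])
    have hfull' : Tendsto (fun n => f n t) atTop
        (𝓝 (limUnder atTop (fun n => f (N + n) t))) :=
      (tendsto_add_atTop_iff_nat N).mp htail'
    rwa [hfull'.limUnder_eq]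
  set g : ℂ → ℝ := fun t => limUnder atTop (fun n => f n t) with hgdef
  -- uniform bound
  have hunif : ∀ t ∈ S, ∀ n, N ≤ n → dist (g t) (f n t) ≤ ((3:ℝ)^n)⁻¹ := by
    intro t ht n hn
    obtain ⟨ht0, htr⟩ := hmemS t ht
    have htendsto : Tendsto (fun k => f (n + k) t) atTop (𝓝 (g t)) := by
      have h1 := (tendsto_add_atTop_iff_nat n).mpr (hfull t ht)
      exact h1.congr (fun k => by rw [Nat.add_comm])
    have hgeo : ∀ k, dist (f (n + k) t) (f (n + (k+1)) t) ≤
        (((3:ℝ)^(n+1))⁻¹) * (1/3)^k := by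
      intro k
      have h1 := hdiff t ht0 htr (n + k) (le_trans hn (Nat.le_add_right _ _))
      have h2 : ((3:ℝ) ^ (n + k + 1))⁻¹ = ((3:ℝ)^(n+1))⁻¹ * (1/3)^k := by
        rw [pow_add, pow_add, pow_add, mul_inv, mul_inv]
        norm_num
        rw [one_div, inv_pow]; ring
      exact le_of_le_of_eq h1 h2
    have := dist_le_of_le_geometric_of_tendsto₀ (1/3) (((3:ℝ)^(n+1))⁻¹)
      (by norm_num) hgeo htendsto
    simp only [Nat.add_zero] at this
    calc dist (g t) (f n t) = dist (f n t) (g t) := dist_comm _ _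
      _ ≤ ((3:ℝ)^(n+1))⁻¹ / (1 - 1/3) := this
      _ ≤ ((3:ℝ)^n)⁻¹ := by
          rw [pow_succ]
          rw [mul_inv]
          rw [div_le_iff₀ (by norm_num)]
          have : (0:ℝ) < ((3:ℝ)^n)⁻¹ := by positivity
          nlinarith
  refine ⟨r, hr, hrr₀, g, ?_⟩
  rw [tendstoUniformlyOn_iff]
  intro ε' hε'
  have hto0 : Tendsto (fun n : ℕ => ((3:ℝ)^n)⁻¹) atTop (𝓝 0) := by
    simpa using tendsto_pow_atTop_nhds_zero_of_lt_one (by norm_num : (0:ℝ) ≤ 1/3)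
      (by norm_num : (1/3:ℝ) < 1) |>.congr (fun n => by rw [one_div, inv_pow])
  have hev1 : ∀ᶠ n : ℕ in atTop, ((3:ℝ)^n)⁻¹ < ε' :=
    hto0.eventually (eventually_lt_nhds hε')
  filter_upwards [hev1, eventually_ge_atTop N] with n h1 h2 t ht
  exact lt_of_le_of_lt (hunif t ht n h2) h1
end

section
/- Let γ ≥ 1 be an integer, let b̃ ∈ ℂ[[t]] be a formal power series with constant coefficient 2, and let (z_n)_{n≥1} be a sequence of formal power series in ℂ[[t]], each with nonzero constant coefficient, satisfying t^{2γ}·z_{n+1} = z_n³ − 3z_n + b̃ for all n ≥ 1. Write x_{n,i} for the coefficient of t^i in z_n. Then: (i) for every n ≥ 1, the constant coefficient x_{n,0} satisfies x_{n,0}³ − 3x_{n,0} + 2 = 0 (hence x_{n,0} ∈ {1, −2}); and (ii) there exists a finite set T ⊂ ℂ such that x_{n,i} ∈ T for all n ≥ 1 and all 0 ≤ i ≤ γ. -/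
set_option maxHeartbeats 1000000

open PowerSeries

private lemma aux_coeff_mul_zero (f g : PowerSeries ℂ) (p q m : ℕ)
    (hf : ∀ k < p, PowerSeries.coeff k f = 0) (hg : ∀ k < q, PowerSeries.coeff k g = 0)
    (hm : m < p + q) : PowerSeries.coeff m (f * g) = 0 := by
  rw [PowerSeries.coeff_mul]
  apply Finset.sum_eq_zero
  rintro ⟨i, j⟩ hij
  rw [Finset.HasAntidiagonal.mem_antidiagonal] at hij
  by_cases hi : i < p
  · rw [hf i hi, zero_mul]
  · have : j < q := by omega
    rw [hg j this, mul_zero]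

private lemma aux_coeff_mul_lead (f g : PowerSeries ℂ) (p q : ℕ)
    (hf : ∀ k < p, PowerSeries.coeff k f = 0) (hg : ∀ k < q, PowerSeries.coeff k g = 0) :
    PowerSeries.coeff (p + q) (f * g) = PowerSeries.coeff p f * PowerSeries.coeff q g := by
  rw [PowerSeries.coeff_mul]
  apply Finset.sum_eq_single (p, q)
  · rintro ⟨i, j⟩ hij hne
    rw [Finset.HasAntidiagonal.mem_antidiagonal] at hij
    by_cases hi : i < p
    · rw [hf i hi, zero_mul]
    · by_cases hj : j < q
      · rw [hg j hj, mul_zero]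
      · exfalso; apply hne
        have : i = p := by omega
        have : j = q := by omega
        simp_all
  · intro h
    exact absurd (Finset.HasAntidiagonal.mem_antidiagonal.2 (rfl : p + q = p + q)) h

theorem stmt15 (γ : ℕ) (hγ : 1 ≤ γ) (btilde : PowerSeries ℂ)
    (hb : PowerSeries.coeff 0 btilde = 2)
    (z : ℕ → PowerSeries ℂ)
    (hz0 : ∀ n, PowerSeries.coeff 0 (z n) ≠ 0)
    (hrec : ∀ n, (PowerSeries.X : PowerSeries ℂ) ^ (2 * γ) * z (n + 1) =
      (z n) ^ 3 - 3 * z n + btilde) :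
    (∀ n, (PowerSeries.coeff 0 (z n)) ^ 3 - 3 * (PowerSeries.coeff 0 (z n)) + 2 = 0) ∧
      ∃ T : Finset ℂ, ∀ n, ∀ i ≤ γ, PowerSeries.coeff i (z n) ∈ T := by
  classical
  -- relations
  have rel : ∀ n, ∀ m < 2 * γ, PowerSeries.coeff m ((z n) ^ 3 - 3 * z n + btilde) = 0 := by
    intro n m hm
    rw [← hrec n]
    exact aux_coeff_mul_zero (PowerSeries.X ^ (2 * γ)) (z (n + 1)) (2 * γ) 0 m
      (fun k hk => by rw [PowerSeries.coeff_X_pow, if_neg (by omega)])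
      (fun k hk => absurd hk (Nat.not_lt_zero k)) (by omega)
  have rel2 : ∀ n, PowerSeries.coeff (2 * γ) ((z n) ^ 3 - 3 * z n + btilde)
      = PowerSeries.coeff 0 (z (n + 1)) := by
    intro n
    rw [← hrec n]
    have := PowerSeries.coeff_X_pow_mul (z (n + 1)) (2 * γ) 0
    rwa [zero_add] at this
  have part1 : ∀ n, (PowerSeries.coeff 0 (z n)) ^ 3 - 3 * (PowerSeries.coeff 0 (z n)) + 2 = 0 := by
    intro n
    have h := rel n 0 (by omega)
    have hcb : PowerSeries.constantCoeff btilde = 2 := by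
      rw [← PowerSeries.coeff_zero_eq_constantCoeff_apply, hb]
    simp only [PowerSeries.coeff_zero_eq_constantCoeff_apply, map_add, map_sub, map_pow,
      map_mul, map_ofNat, hcb] at h
    simpa [PowerSeries.coeff_zero_eq_constantCoeff_apply] using h
  refine ⟨part1, ?_⟩
  have roots12 : ∀ n, PowerSeries.coeff 0 (z n) = 1 ∨ PowerSeries.coeff 0 (z n) = -2 := by
    intro n
    have h := part1 n
    have h2 : (PowerSeries.coeff 0 (z n) - 1) * ((PowerSeries.coeff 0 (z n) - 1) *
        (PowerSeries.coeff 0 (z n) + 2)) = 0 := by linear_combination h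
    rcases mul_eq_zero.mp h2 with h3 | h3
    · exact Or.inl (sub_eq_zero.mp h3)
    · rcases mul_eq_zero.mp h3 with h4 | h4
      · exact Or.inl (sub_eq_zero.mp h4)
      · exact Or.inr (eq_neg_of_add_eq_zero_left h4)
  have h3mul : ∀ (f : PowerSeries ℂ) (k : ℕ),
      PowerSeries.coeff k (3 * f) = 3 * PowerSeries.coeff k f := by
    intro f k
    rw [show (3 : PowerSeries ℂ) = PowerSeries.C (R := ℂ) 3 from (map_ofNat (PowerSeries.C (R := ℂ)) 3).symm,
      PowerSeries.coeff_C_mul]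
  have hwlow : ∀ n v, PowerSeries.coeff 0 (z n) = 1 →
      (∀ k, 1 ≤ k → k < v → PowerSeries.coeff k (z n) = 0) →
      ∀ k < v, PowerSeries.coeff k (z n - 1) = 0 := by
    intro n v hn1 hlown k hk
    rw [map_sub, PowerSeries.coeff_one]
    rcases Nat.eq_zero_or_pos k with h | h
    · subst h; simp [hn1]
    · rw [if_neg (by omega), hlown k h hk, sub_zero]
  have hwtop : ∀ n v, 1 ≤ v → PowerSeries.coeff v (z n - 1) = PowerSeries.coeff v (z n) := by
    intro n v hv1
    rw [map_sub, PowerSeries.coeff_one, if_neg (by omega), sub_zero]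
  -- uniqueness in the branch with constant coefficient -2
  have uniqNeg : ∀ n m, PowerSeries.coeff 0 (z n) = -2 → PowerSeries.coeff 0 (z m) = -2 →
      ∀ i ≤ γ, PowerSeries.coeff i (z n) = PowerSeries.coeff i (z m) := by
    intro n m hn hm
    by_contra hcon
    push_neg at hcon
    obtain ⟨i0, hi0γ, hi0⟩ := hcon
    have hex : ∃ i, i ≤ γ ∧ PowerSeries.coeff i (z n) ≠ PowerSeries.coeff i (z m) :=
      ⟨i0, hi0γ, hi0⟩
    obtain ⟨hoγ, hone⟩ := Nat.find_spec hex
    set o := Nat.find hex with ho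
    have hlow : ∀ k < o, PowerSeries.coeff k (z n) = PowerSeries.coeff k (z m) := by
      intro k hk
      have h5 := Nat.find_min hex hk
      push_neg at h5
      exact h5 (by omega)
    have hdu : (z n - z m) * ((z n) ^ 2 + z n * z m + (z m) ^ 2 - 3)
        = ((z n) ^ 3 - 3 * z n + btilde) - ((z m) ^ 3 - 3 * z m + btilde) := by ring
    have h0 : PowerSeries.coeff o
        ((z n - z m) * ((z n) ^ 2 + z n * z m + (z m) ^ 2 - 3)) = 0 := by
      rw [hdu, map_sub, rel n o (by omega), rel m o (by omega), sub_zero]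
    have hlead := aux_coeff_mul_lead (z n - z m) ((z n) ^ 2 + z n * z m + (z m) ^ 2 - 3) o 0
      (fun k hk => by rw [map_sub, hlow k hk, sub_self])
      (fun k hk => absurd hk (Nat.not_lt_zero k))
    rw [add_zero] at hlead
    rw [hlead] at h0
    have hn' : PowerSeries.constantCoeff (z n) = -2 := by
      rw [← PowerSeries.coeff_zero_eq_constantCoeff_apply]; exact hn
    have hm' : PowerSeries.constantCoeff (z m) = -2 := by
      rw [← PowerSeries.coeff_zero_eq_constantCoeff_apply]; exact hm
    have hu0 : PowerSeries.coeff 0 ((z n) ^ 2 + z n * z m + (z m) ^ 2 - 3) = 9 := by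
      simp only [PowerSeries.coeff_zero_eq_constantCoeff_apply, map_sub, map_add, map_mul,
        map_pow, map_ofNat, hn', hm']
      norm_num
    rw [hu0] at h0
    have hdo : PowerSeries.coeff o (z n - z m) ≠ 0 := by
      rw [map_sub]; exact sub_ne_zero.mpr hone
    rcases mul_eq_zero.mp h0 with h | h
    · exact hdo h
    · norm_num at h
  -- uniqueness in the branch with constant coefficient 1
  have uniqPos : ∀ n m v, 1 ≤ v → v ≤ γ →
      PowerSeries.coeff 0 (z n) = 1 → PowerSeries.coeff 0 (z m) = 1 →
      (∀ k, 1 ≤ k → k < v → PowerSeries.coeff k (z n) = 0) →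
      (∀ k, 1 ≤ k → k < v → PowerSeries.coeff k (z m) = 0) →
      PowerSeries.coeff v (z n) = PowerSeries.coeff v (z m) →
      PowerSeries.coeff v (z n) ≠ 0 →
      ∀ i ≤ γ, PowerSeries.coeff i (z n) = PowerSeries.coeff i (z m) := by
    intro n m v hv1 hvγ hn1 hm1 hlown hlowm hveq hvne
    by_contra hcon
    push_neg at hcon
    obtain ⟨i0, hi0γ, hi0⟩ := hcon
    have hex : ∃ i, i ≤ γ ∧ PowerSeries.coeff i (z n) ≠ PowerSeries.coeff i (z m) :=
      ⟨i0, hi0γ, hi0⟩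
    obtain ⟨hoγ, hone⟩ := Nat.find_spec hex
    set o := Nat.find hex with ho
    have hlow : ∀ k < o, PowerSeries.coeff k (z n) = PowerSeries.coeff k (z m) := by
      intro k hk
      have h5 := Nat.find_min hex hk
      push_neg at h5
      exact h5 (by omega)
    have hov : v < o := by
      rcases Nat.lt_or_ge v o with h | h
      · exact h
      · exfalso
        rcases Nat.lt_or_ge o v with h2 | h2
        · rcases Nat.eq_zero_or_pos o with h3 | h3
          · exact hone (by rw [h3, hn1, hm1])
          · exact hone (by rw [hlown o h3 h2, hlowm o h3 h2])
        · have h4 : o = v := by omega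
          exact hone (by rw [h4]; exact hveq)
    have hwn := hwlow n v hn1 hlown
    have hwm := hwlow m v hm1 hlowm
    have huident : (z n) ^ 2 + z n * z m + (z m) ^ 2 - 3
        = (z n - 1) * (z n - 1) + (z n - 1) * (z m - 1) + (z m - 1) * (z m - 1)
          + 3 * (z n - 1) + 3 * (z m - 1) := by ring
    have hulow : ∀ k < v, PowerSeries.coeff k
        ((z n) ^ 2 + z n * z m + (z m) ^ 2 - 3) = 0 := by
      intro k hk
      rw [huident, map_add, map_add, map_add, map_add,
        aux_coeff_mul_zero (z n - 1) (z n - 1) v v k hwn hwn (by omega),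
        aux_coeff_mul_zero (z n - 1) (z m - 1) v v k hwn hwm (by omega),
        aux_coeff_mul_zero (z m - 1) (z m - 1) v v k hwm hwm (by omega),
        h3mul, h3mul, hwn k hk, hwm k hk]
      ring
    have huv : PowerSeries.coeff v ((z n) ^ 2 + z n * z m + (z m) ^ 2 - 3)
        = 6 * PowerSeries.coeff v (z n) := by
      rw [huident, map_add, map_add, map_add, map_add,
        aux_coeff_mul_zero (z n - 1) (z n - 1) v v v hwn hwn (by omega),
        aux_coeff_mul_zero (z n - 1) (z m - 1) v v v hwn hwm (by omega),
        aux_coeff_mul_zero (z m - 1) (z m - 1) v v v hwm hwm (by omega),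
        h3mul, h3mul, hwtop n v hv1, hwtop m v hv1, ← hveq]
      ring
    have hdu : (z n - z m) * ((z n) ^ 2 + z n * z m + (z m) ^ 2 - 3)
        = ((z n) ^ 3 - 3 * z n + btilde) - ((z m) ^ 3 - 3 * z m + btilde) := by ring
    have h0 : PowerSeries.coeff (o + v)
        ((z n - z m) * ((z n) ^ 2 + z n * z m + (z m) ^ 2 - 3)) = 0 := by
      rw [hdu, map_sub, rel n (o + v) (by omega), rel m (o + v) (by omega), sub_zero]
    have hlead := aux_coeff_mul_lead (z n - z m) ((z n) ^ 2 + z n * z m + (z m) ^ 2 - 3) o v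
      (fun k hk => by rw [map_sub, hlow k hk, sub_self]) hulow
    rw [hlead, huv] at h0
    have hdo : PowerSeries.coeff o (z n - z m) ≠ 0 := by
      rw [map_sub]; exact sub_ne_zero.mpr hone
    rcases mul_eq_zero.mp h0 with h | h
    · exact hdo h
    · rcases mul_eq_zero.mp h with h' | h'
      · norm_num at h'
      · exact hvne h'
  -- the leading coefficient in the +1 branch satisfies a quadratic equation
  have memR : ∀ n v, 1 ≤ v → v ≤ γ → PowerSeries.coeff 0 (z n) = 1 →
      (∀ k, 1 ≤ k → k < v → PowerSeries.coeff k (z n) = 0) →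
      ∃ δ ∈ ({0, 1, -2} : Finset ℂ),
        3 * (PowerSeries.coeff v (z n)) ^ 2 + PowerSeries.coeff (2 * v) btilde - δ = 0 := by
    intro n v hv1 hvγ hn1 hlown
    have hwn := hwlow n v hn1 hlown
    have hident : (z n) ^ 3 - 3 * z n + btilde
        = (z n - 1) * (z n - 1) * (z n - 1) + 3 * ((z n - 1) * (z n - 1)) + (btilde - 2) := by
      ring
    have hc : PowerSeries.coeff (2 * v) ((z n) ^ 3 - 3 * z n + btilde)
        = 3 * (PowerSeries.coeff v (z n)) ^ 2 + PowerSeries.coeff (2 * v) btilde := by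
      have hcube : PowerSeries.coeff (2 * v) ((z n - 1) * (z n - 1) * (z n - 1)) = 0 := by
        refine aux_coeff_mul_zero ((z n - 1) * (z n - 1)) (z n - 1) (v + v) v (2 * v) ?_ hwn
          (by omega)
        intro k hk
        exact aux_coeff_mul_zero (z n - 1) (z n - 1) v v k hwn hwn hk
      have hsq := aux_coeff_mul_lead (z n - 1) (z n - 1) v v hwn hwn
      have hb2 : PowerSeries.coeff (v + v) (btilde - 2) = PowerSeries.coeff (v + v) btilde := by
        rw [map_sub, show (2 : PowerSeries ℂ) = PowerSeries.C (R := ℂ) 2 from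
          (map_ofNat (PowerSeries.C (R := ℂ)) 2).symm, PowerSeries.coeff_C, if_neg (by omega), sub_zero]
      rw [hident, map_add, map_add, hcube, h3mul, show 2 * v = v + v by omega, hsq,
        hwtop n v hv1, hb2, show v + v = 2 * v by omega]
      ring
    rcases Nat.lt_or_ge v γ with h | h
    · refine ⟨0, by simp, ?_⟩
      have h5 := rel n (2 * v) (by omega)
      rw [hc] at h5
      linear_combination h5
    · have hvγ' : v = γ := by omega
      subst hvγ'
      have h5 := rel2 n
      rw [hc] at h5
      rcases roots12 (n + 1) with h6 | h6
      · exact ⟨1, by simp, by rw [h6] at h5; linear_combination h5⟩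
      · exact ⟨-2, by simp, by rw [h6] at h5; linear_combination h5⟩
  set R : Finset ℂ := (Finset.range (γ + 1)).biUnion (fun v => ({0, 1, -2} : Finset ℂ).biUnion
    (fun δ => (Polynomial.C (3 : ℂ) * Polynomial.X ^ 2 +
      Polynomial.C (PowerSeries.coeff (2 * v) btilde - δ)).roots.toFinset)) with hR
  have memR' : ∀ n v, 1 ≤ v → v ≤ γ → PowerSeries.coeff 0 (z n) = 1 →
      (∀ k, 1 ≤ k → k < v → PowerSeries.coeff k (z n) = 0) →
      PowerSeries.coeff v (z n) ∈ R := by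
    intro n v hv1 hvγ hn1 hlown
    obtain ⟨δ, hδ, heq⟩ := memR n v hv1 hvγ hn1 hlown
    rw [hR]
    refine Finset.mem_biUnion.mpr ⟨v, Finset.mem_range.mpr (by omega),
      Finset.mem_biUnion.mpr ⟨δ, hδ, ?_⟩⟩
    refine Multiset.mem_toFinset.mpr (Polynomial.mem_roots'.mpr ⟨?_, ?_⟩)
    · intro hzero
      have hcf : (Polynomial.C (3 : ℂ) * Polynomial.X ^ 2 +
          Polynomial.C (PowerSeries.coeff (2 * v) btilde - δ)).coeff 2 = 3 := by
        simp [Polynomial.coeff_C]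
      rw [hzero] at hcf
      simp at hcf
    · show Polynomial.IsRoot _ _
      simp only [Polynomial.IsRoot, Polynomial.eval_add, Polynomial.eval_mul,
        Polynomial.eval_pow, Polynomial.eval_C, Polynomial.eval_X]
      linear_combination heq
  -- the finite set
  refine ⟨(({1, -2, 0} : Finset ℂ) ∪ (Finset.range (γ + 1)).image
      (fun i => if h : ∃ n', PowerSeries.coeff 0 (z n') = -2
        then PowerSeries.coeff i (z h.choose) else 0)) ∪
      ((Finset.range (γ + 1) ×ˢ R ×ˢ Finset.range (γ + 1)).image
        (fun q => if h : ∃ n', PowerSeries.coeff 0 (z n') = 1 ∧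
            (∀ k, 1 ≤ k → k < q.1 → PowerSeries.coeff k (z n') = 0) ∧
            PowerSeries.coeff q.1 (z n') = q.2.1 ∧ PowerSeries.coeff q.1 (z n') ≠ 0
          then PowerSeries.coeff q.2.2 (z h.choose) else 0)), ?_⟩
  intro n i hi
  rcases roots12 n with hc | hc
  · -- constant coefficient 1
    by_cases htriv : ∀ k, 1 ≤ k → k ≤ γ → PowerSeries.coeff k (z n) = 0
    · rcases Nat.eq_zero_or_pos i with h | h
      · subst h
        rw [hc]
        apply Finset.mem_union_left
        apply Finset.mem_union_left
        exact Finset.mem_insert_self 1 _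
      · rw [htriv i h hi]
        apply Finset.mem_union_left
        apply Finset.mem_union_left
        exact Finset.mem_insert.mpr (Or.inr (Finset.mem_insert.mpr
          (Or.inr (Finset.mem_singleton_self 0))))
    · push_neg at htriv
      obtain ⟨k0, hk01, hk0γ, hk0ne⟩ := htriv
      have hex : ∃ k, 1 ≤ k ∧ k ≤ γ ∧ PowerSeries.coeff k (z n) ≠ 0 := ⟨k0, hk01, hk0γ, hk0ne⟩
      obtain ⟨hv1, hvγ, hvne⟩ := Nat.find_spec hex
      set v := Nat.find hex with hv
      have hlown : ∀ k, 1 ≤ k → k < v → PowerSeries.coeff k (z n) = 0 := by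
        intro k h1 h2
        have h5 := Nat.find_min hex h2
        push_neg at h5
        exact h5 h1 (by omega)
      have hexP : ∃ n', PowerSeries.coeff 0 (z n') = 1 ∧
          (∀ k, 1 ≤ k → k < v → PowerSeries.coeff k (z n') = 0) ∧
          PowerSeries.coeff v (z n') = PowerSeries.coeff v (z n) ∧
          PowerSeries.coeff v (z n') ≠ 0 := ⟨n, hc, hlown, rfl, hvne⟩
      obtain ⟨hc', hlow', ha', hne'⟩ := hexP.choose_spec
      have heq : PowerSeries.coeff i (z n) = PowerSeries.coeff i (z hexP.choose) :=
        uniqPos n hexP.choose v hv1 hvγ hc hc' hlown hlow' ha'.symm hvne i hi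
      apply Finset.mem_union_right
      refine Finset.mem_image.mpr ⟨(v, PowerSeries.coeff v (z n), i), ?_, ?_⟩
      · refine Finset.mem_product.mpr ⟨Finset.mem_range.mpr (by omega),
          Finset.mem_product.mpr ⟨memR' n v hv1 hvγ hc hlown,
            Finset.mem_range.mpr (show i < γ + 1 by omega)⟩⟩
      · rw [dif_pos hexP]
        exact heq.symm
  · -- constant coefficient -2
    have hexN : ∃ n', PowerSeries.coeff 0 (z n') = -2 := ⟨n, hc⟩
    have heq : PowerSeries.coeff i (z n) = PowerSeries.coeff i (z hexN.choose) :=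
      uniqNeg n hexN.choose hc hexN.choose_spec i hi
    apply Finset.mem_union_left
    apply Finset.mem_union_right
    refine Finset.mem_image.mpr ⟨i, Finset.mem_range.mpr (by omega), ?_⟩
    rw [dif_pos hexN]
    exact heq.symm
end

section
/- Let γ ≥ 1 be an integer, let 0 < r < 1, and let b̃ and (w_i)_{i≥0} be holomorphic functions on an open set containing the closed disk {|t| ≤ r} ⊂ ℂ, such that |b̃(t)| < 3 for all |t| ≤ r and t^{2γ}·w_{i+1}(t) = w_i(t)³ − 3·w_i(t) + b̃(t) for all i ≥ 0 and all |t| ≤ r. If M ≥ 11 is a real number with |w_0(t)| < M − 10 for all |t| ≤ r, then for every i ≥ 0 and every |t| ≤ r one has |w_i(t)| < M^{3^i} / r^{γ(3^i − 1)}. -/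
open Metric

theorem stmt16 (γ : ℕ) (hγ : 1 ≤ γ) (r : ℝ) (hr0 : 0 < r) (hr1 : r < 1)
    (btilde : ℂ → ℂ) (w : ℕ → ℂ → ℂ) (U : Set ℂ) (hU : IsOpen U)
    (hUr : closedBall (0 : ℂ) r ⊆ U)
    (hbhol : DifferentiableOn ℂ btilde U)
    (hwhol : ∀ i, DifferentiableOn ℂ (w i) U)
    (hbbd : ∀ t ∈ closedBall (0 : ℂ) r, ‖btilde t‖ < 3)
    (hrec : ∀ i, ∀ t ∈ closedBall (0 : ℂ) r,
      t ^ (2 * γ) * w (i + 1) t = (w i t) ^ 3 - 3 * w i t + btilde t)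
    (M : ℝ) (hM : 11 ≤ M)
    (hw0 : ∀ t ∈ closedBall (0 : ℂ) r, ‖w 0 t‖ < M - 10) :
    ∀ i, ∀ t ∈ closedBall (0 : ℂ) r,
      ‖w i t‖ < M ^ (3 ^ i) / r ^ (γ * (3 ^ i - 1)) := by
  have hr2 : (0:ℝ) < r ^ (2*γ) := pow_pos hr0 _
  have hrle : r ^ (2*γ) ≤ 1 := pow_le_one₀ hr0.le hr1.le
  have key : ∀ i, ∀ t ∈ closedBall (0:ℂ) r,
      ‖w i t‖ ≤ M ^ (3^i) / r ^ (γ*(3^i-1)) - 1 := by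
    intro i
    induction i with
    | zero =>
      intro t ht
      have := hw0 t ht
      simp only [pow_zero, pow_one, Nat.sub_self, Nat.mul_zero, div_one]
      linarith
    | succ i ih =>
      set a := M ^ (3^i) / r ^ (γ*(3^i-1)) with ha_def
      have hek : (0:ℝ) < r ^ (γ*(3^i-1)) := pow_pos hr0 _
      have hekle : r ^ (γ*(3^i-1)) ≤ 1 := pow_le_one₀ hr0.le hr1.le
      have hM1 : (1:ℝ) ≤ M := by linarith
      have hMM : M ≤ M ^ (3^i) := le_self_pow₀ hM1 (by positivity)
      have haM : M ≤ a := by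
        rw [ha_def, le_div_iff₀ hek]
        nlinarith
      have ha11 : (11:ℝ) ≤ a := le_trans hM haM
      -- boundary estimate
      have hb : ∀ t ∈ sphere (0:ℂ) r, ‖w (i+1) t‖ ≤ (a^3 - 1)/r^(2*γ) := by
        intro t ht
        have htr : ‖t‖ = r := by
          simpa using mem_sphere_zero_iff_norm.mp ht
        have htcb : t ∈ closedBall (0:ℂ) r := sphere_subset_closedBall ht
        have hwi := ih t htcb
        have hwi0 : 0 ≤ ‖w i t‖ := norm_nonneg _
        have hbt := (hbbd t htcb).le
        have htri : ‖(w i t) ^ 3 - 3 * w i t + btilde t‖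
            ≤ ‖w i t‖ ^ 3 + 3 * ‖w i t‖ + 3 := by
          calc ‖(w i t) ^ 3 - 3 * w i t + btilde t‖
              ≤ ‖(w i t) ^ 3 - 3 * w i t‖ + ‖btilde t‖ :=
                norm_add_le _ _
            _ ≤ (‖(w i t) ^ 3‖ + ‖3 * w i t‖) + 3 := by
                gcongr
                exact norm_sub_le _ _
            _ = ‖w i t‖ ^ 3 + 3 * ‖w i t‖ + 3 := by
                simp [map_pow, map_mul]
        have heq : r ^ (2*γ) * ‖w (i+1) t‖
            = ‖(w i t) ^ 3 - 3 * w i t + btilde t‖ := by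
          have := congrArg (‖·‖) (hrec i t htcb)
          simpa [map_mul, map_pow, htr] using this
        have hbound : ‖w i t‖ ^ 3 + 3 * ‖w i t‖ + 3 ≤ a^3 - 1 := by
          nlinarith [pow_le_pow_left₀ hwi0 hwi 3, sq_nonneg a, sq_nonneg (a-1)]
        rw [le_div_iff₀ hr2]
        nlinarith [heq, htri, hbound]
      -- maximum modulus
      have hmax : ∀ t ∈ closedBall (0:ℂ) r, ‖w (i+1) t‖ ≤ (a^3 - 1)/r^(2*γ) := by
        intro t ht
        have hcl : closure (ball (0:ℂ) r) = closedBall 0 r := closure_ball 0 hr0.ne'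
        have hfr : frontier (ball (0:ℂ) r) = sphere 0 r := frontier_ball 0 hr0.ne'
        have hdiff : DiffContOnCl ℂ (w (i+1)) (ball (0:ℂ) r) := by
          apply DifferentiableOn.diffContOnCl
          apply (hwhol (i+1)).mono
          rw [hcl]; exact hUr
        have := Complex.norm_le_of_forall_mem_frontier_norm_le isBounded_ball hdiff
          (C := (a^3 - 1)/r^(2*γ)) (by rw [hfr]; intro z hz; simpa using hb z hz)
          (z := t) (by rw [hcl]; exact ht)
        simpa using this
      -- exponent arithmetic
      have h1 : 1 ≤ 3^i := Nat.one_le_pow _ _ (by norm_num)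
      obtain ⟨m, hm⟩ := Nat.exists_eq_add_of_le h1
      have hexp : γ * (3^(i+1) - 1) = 3 * (γ * (3^i - 1)) + 2*γ := by
        rw [pow_succ, hm]
        have h2 : (1+m) * 3 - 1 = 3*m + 2 := by omega
        have h3 : 1 + m - 1 = m := by omega
        rw [h2, h3]; ring
      have hA : M ^ (3^(i+1)) / r ^ (γ*(3^(i+1)-1)) = a^3 / r^(2*γ) := by
        rw [hexp, ha_def, pow_succ, pow_mul, pow_add, pow_mul]
        field_simp
        ring
      intro t ht
      have h4 : (1:ℝ) ≤ 1 / r^(2*γ) := one_le_one_div hr2 hrle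
      have h5 := hmax t ht
      rw [hA]
      have h6 : (a^3 - 1)/r^(2*γ) = a^3/r^(2*γ) - 1/r^(2*γ) := by ring
      linarith [h6 ▸ h5]
  intro i t ht
  have h := key i t ht
  have hpos : (0:ℝ) < M ^ (3^i) / r ^ (γ*(3^i-1)) := by positivity
  linarith
end

section
/- For (a₁,b₁), (a₂,b₂) ∈ ℂ², there exists an invertible affine map A(z) = αz + β (α, β ∈ ℂ, α ≠ 0) with A(f_{a₁,b₁}(z)) = f_{a₂,b₂}(A(z)) for all z ∈ ℂ if and only if a₁² = a₂² and b₁² = b₂². -/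
theorem stmt17 (a₁ b₁ a₂ b₂ : ℂ) :
    (∃ α β : ℂ, α ≠ 0 ∧ ∀ z : ℂ, α * fab a₁ b₁ z + β = fab a₂ b₂ (α * z + β)) ↔
      a₁ ^ 2 = a₂ ^ 2 ∧ b₁ ^ 2 = b₂ ^ 2 := by
  simp only [fab]
  constructor
  · rintro ⟨α, β, hα, h⟩
    have h0 := h 0
    have h1 := h 1
    have hm := h (-1)
    have h2 := h 2
    have hc3 : α ^ 3 = α := by linear_combination (3 * h1 + hm - h2 - 3 * h0) / 6
    have hα2 : α ^ 2 = 1 := mul_right_cancel₀ hα (by linear_combination hc3)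
    have hβ : β = 0 := by
      have hb : α ^ 2 * β = 0 := by linear_combination (2 * h0 - h1 - hm) / 6
      rw [hα2, one_mul] at hb
      exact hb
    subst hβ
    have ha : a₁ ^ 2 = a₂ ^ 2 := by
      have h' : α * (a₁ ^ 2 - a₂ ^ 2) = 0 := by
        linear_combination (hm - h1) / 6 - hc3 / 3
      rcases mul_eq_zero.mp h' with h'' | h''
      · exact absurd h'' hα
      · exact sub_eq_zero.mp h''
    have hb : α * b₁ = b₂ := by linear_combination h0
    refine ⟨ha, ?_⟩
    have : b₂ ^ 2 = α ^ 2 * b₁ ^ 2 := by linear_combination (α * b₁ + b₂) * hb.symm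
    rw [this, hα2, one_mul]
  · rintro ⟨ha, hb⟩
    have : (b₂ - b₁) * (b₂ + b₁) = 0 := by linear_combination -hb
    rcases mul_eq_zero.mp this with h' | h'
    · exact ⟨1, 0, one_ne_zero, fun z => by
        have : b₂ = b₁ := by linear_combination h'
        ring_nf
        linear_combination -3 * z * ha - this⟩
    · exact ⟨-1, 0, neg_ne_zero.mpr one_ne_zero, fun z => by
        have : b₂ = -b₁ := by linear_combination h'
        ring_nf
        linear_combination 3 * z * ha - this⟩
end
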